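/- arXiv:1311.6292 — 7 statements merged into one kernel-verified Lean document; each statement's English description precedes it below -/
import Mathlib

section
/- For all integers n ≥ 1, ℓ ≥ 1 and k ≥ 0, the number of 132-avoiding permutations σ of {1,…,n} with mmp(ℓ,0,0,0)(σ) = k equals the number of Dyck paths with 2n steps having exactly k down-steps ending at height greater than or equal to ℓ. -/
/-- A permutation `σ` of `{1,…,n}` (as a permutation of `Fin n`) avoids the pattern 132 if
there are no indices `i < j < k` with `σ i < σ k < σ j`. -/
def Avoids132 (n : ℕ) (σ : Equiv.Perm (Fin n)) : Prop :=
  ∀ i j k : Fin n, i < j → j < k → ¬(σ i < σ k ∧ σ k < σ j)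

/-- `mmp n a b c d σ` is the number of indices `i` matching the marked mesh pattern
`MMP(a,b,c,d)` in `σ`: there are at least `a` indices `j > i` with `σ j > σ i`,
at least `b` indices `j < i` with `σ j > σ i`, at least `c` indices `j < i` with
`σ j < σ i`, and at least `d` indices `j > i` with `σ j < σ i`. -/
noncomputable def mmp (n a b c d : ℕ) (σ : Equiv.Perm (Fin n)) : ℕ :=
  Nat.card {i : Fin n |
    a ≤ Nat.card {j : Fin n | i < j ∧ σ i < σ j} ∧
    b ≤ Nat.card {j : Fin n | j < i ∧ σ i < σ j} ∧
    c ≤ Nat.card {j : Fin n | j < i ∧ σ j < σ i} ∧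
    d ≤ Nat.card {j : Fin n | i < j ∧ σ j < σ i}}

/-- A Dyck path, encoded as a list of booleans (`true` = up-step `(1,1)`,
`false` = down-step `(1,-1)`): every prefix has at least as many up-steps as
down-steps (never goes below the x-axis), and the total numbers of up- and
down-steps agree (the path ends on the x-axis). -/
def IsDyck (p : List Bool) : Prop :=
  (∀ i : ℕ, (p.take i).count false ≤ (p.take i).count true) ∧
    p.count false = p.count true

/-- The number of down-steps of the path `p` ending at height at least `ℓ`:
the height after step `i` is the number of up-steps minus the number of
down-steps among the first `i+1` steps. -/
noncomputable def downStepsAtLeast (ℓ : ℕ) (p : List Bool) : ℕ :=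
  Nat.card {i : Fin p.length | p.get i = false ∧
    (p.take ((i : ℕ) + 1)).count false + ℓ ≤ (p.take ((i : ℕ) + 1)).count true}

namespace MMPaux
open Finset

open scoped Classical in
noncomputable def cnt (m : ℕ) (P : ℕ → Prop) : ℕ := ∑ i ∈ Finset.range m, if P i then 1 else 0

open scoped Classical in
theorem cnt_congr {m : ℕ} {P Q : ℕ → Prop} (h : ∀ i, i < m → (P i ↔ Q i)) :
    cnt m P = cnt m Q := by
  unfold cnt
  apply Finset.sum_congr rfl
  intro i hi
  simp only [Finset.mem_range] at hi
  simp [h i hi]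

open scoped Classical in
theorem cnt_add (x y : ℕ) (P : ℕ → Prop) :
    cnt (x + y) P = cnt x P + cnt y (fun i => P (x + i)) := by
  unfold cnt
  exact Finset.sum_range_add _ x y

open scoped Classical in
theorem cnt_one (P : ℕ → Prop) : cnt 1 P = if P 0 then 1 else 0 := by
  unfold cnt
  rw [Finset.sum_range_one]

theorem cnt_le (m : ℕ) (P : ℕ → Prop) : cnt m P ≤ m := by
  classical
  unfold cnt
  calc ∑ i ∈ Finset.range m, (if P i then 1 else 0) ≤ ∑ i ∈ Finset.range m, 1 := by
        apply Finset.sum_le_sum; intro i _; split <;> omega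
    _ = m := by simp

theorem cnt_true {m : ℕ} {P : ℕ → Prop} (h : ∀ i, i < m → P i) : cnt m P = m := by
  classical
  unfold cnt
  calc ∑ i ∈ Finset.range m, (if P i then 1 else 0)
      = ∑ i ∈ Finset.range m, 1 :=
        Finset.sum_congr rfl (fun i hi => by simp [h i (Finset.mem_range.mp hi)])
    _ = m := by simp

theorem cnt_false {m : ℕ} {P : ℕ → Prop} (h : ∀ i, i < m → ¬ P i) : cnt m P = 0 := by
  classical
  unfold cnt
  apply Finset.sum_eq_zero
  intro i hi
  simp [h i (Finset.mem_range.mp hi)]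

theorem natCard_setOf {n : ℕ} {Q : Fin n → Prop} {P : ℕ → Prop}
    (h : ∀ i : Fin n, Q i ↔ P i) : Nat.card {i : Fin n | Q i} = cnt n P := by
  classical
  rw [Nat.card_eq_fintype_card]
  rw [Fintype.card_subtype]
  rw [Finset.card_filter]
  unfold cnt
  rw [← Fin.sum_univ_eq_sum_range (fun i => if P i then 1 else 0) n]
  apply Finset.sum_congr rfl
  intro i _
  simp [h i]


/-- ℕ-valued view of a permutation. -/
noncomputable def sv (n : ℕ) (σ : Equiv.Perm (Fin n)) (i : ℕ) : ℕ :=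
  if h : i < n then (σ ⟨i, h⟩ : ℕ) else 0

theorem sv_coe {n : ℕ} (σ : Equiv.Perm (Fin n)) (i : Fin n) : sv n σ i = σ i := by
  simp [sv, i.isLt]

theorem sv_lt {n : ℕ} (σ : Equiv.Perm (Fin n)) {i : ℕ} (h : i < n) : sv n σ i < n := by
  simp only [sv, dif_pos h]
  exact (σ ⟨i, h⟩).isLt

theorem sv_inj {n : ℕ} (σ : Equiv.Perm (Fin n)) {i j : ℕ} (hi : i < n) (hj : j < n)
    (h : sv n σ i = sv n σ j) : i = j := by
  simp only [sv, dif_pos hi, dif_pos hj] at h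
  have := σ.injective (Fin.val_injective h)
  simpa [Fin.ext_iff] using this

/-- ℕ-level avoidance. -/
def AvN (n : ℕ) (f : ℕ → ℕ) : Prop :=
  ∀ x y z : ℕ, x < y → y < z → z < n → ¬(f x < f z ∧ f z < f y)

theorem avoids_iff {n : ℕ} (σ : Equiv.Perm (Fin n)) :
    Avoids132 n σ ↔ AvN n (sv n σ) := by
  have key : ∀ (u v : Fin n), (sv n σ u < sv n σ v ↔ σ u < σ v) := by
    intro u v
    rw [sv_coe, sv_coe]
    exact Iff.symm Fin.lt_def
  constructor
  · intro h x y z hxy hyz hz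
    have hy : y < n := by omega
    have hx : x < n := by omega
    have := h ⟨x, hx⟩ ⟨y, hy⟩ ⟨z, hz⟩ hxy hyz
    rw [← key ⟨x, hx⟩ ⟨z, hz⟩, ← key ⟨z, hz⟩ ⟨y, hy⟩] at this
    exact this
  · intro h i j k hij hjk
    have := h i j k hij hjk k.isLt
    rw [key i k, key k j] at this
    exact this

/-- ℕ-level right-larger count. -/
noncomputable def rc (n : ℕ) (f : ℕ → ℕ) (i : ℕ) : ℕ := cnt n (fun j => i < j ∧ f i < f j)

/-- ℕ-level statistic. -/
noncomputable def mmpN (n ℓ : ℕ) (f : ℕ → ℕ) : ℕ := cnt n (fun i => ℓ ≤ rc n f i)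

theorem rc_congr {n : ℕ} {f g : ℕ → ℕ} (h : ∀ i, i < n → f i = g i) (i : ℕ) (hi : i < n) :
    rc n f i = rc n g i := by
  apply cnt_congr
  intro j hj
  rw [h i hi, h j hj]

theorem mmpN_congr {n ℓ : ℕ} {f g : ℕ → ℕ} (h : ∀ i, i < n → f i = g i) :
    mmpN n ℓ f = mmpN n ℓ g := by
  apply cnt_congr
  intro i hi
  rw [rc_congr h i hi]

theorem avN_congr {n : ℕ} {f g : ℕ → ℕ} (h : ∀ i, i < n → f i = g i) :
    AvN n f ↔ AvN n g := by
  constructor <;> intro hA x y z hxy hyz hz <;>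
    have hx : x < n := by omega
  · have hy : y < n := by omega
    rw [← h x hx, ← h y hy, ← h z hz]; exact hA x y z hxy hyz hz
  · have hy : y < n := by omega
    rw [h x hx, h y hy, h z hz]; exact hA x y z hxy hyz hz

theorem mmp_eq {n ℓ : ℕ} (σ : Equiv.Perm (Fin n)) :
    mmp n ℓ 0 0 0 σ = mmpN n ℓ (sv n σ) := by
  unfold mmp mmpN
  apply natCard_setOf
  intro i
  have h1 : Nat.card {j : Fin n | i < j ∧ σ i < σ j} = rc n (sv n σ) i := by
    apply natCard_setOf
    intro j
    rw [show (σ i < σ j ↔ sv n σ i < sv n σ j) by rw [sv_coe, sv_coe]; exact Fin.lt_def,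
      show ((i : Fin n) < j ↔ (i:ℕ) < (j:ℕ)) from Iff.rfl]
  simp only [Nat.zero_le, and_true, true_and, Set.mem_setOf_eq]
  rw [h1]

theorem mmp_le {n ℓ : ℕ} (σ : Equiv.Perm (Fin n)) : mmp n ℓ 0 0 0 σ ≤ n := by
  rw [mmp_eq]; exact cnt_le _ _

theorem mmp_zero {n : ℕ} (σ : Equiv.Perm (Fin n)) : mmp n 0 0 0 0 σ = n := by
  rw [mmp_eq]; exact cnt_true (fun i _ => Nat.zero_le _)

/-- The merge of value functions. -/
def G (a b : ℕ) (f g : ℕ → ℕ) (i : ℕ) : ℕ :=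
  if i < a then b + f i else if i = a then a + b else g (i - (a + 1))

theorem G_lt {a b : ℕ} {f g : ℕ → ℕ} {i : ℕ} (h : i < a) : G a b f g i = b + f i := by
  simp [G, h]

theorem G_eq {a b : ℕ} {f g : ℕ → ℕ} : G a b f g a = a + b := by
  simp [G]

theorem G_gt {a b : ℕ} {f g : ℕ → ℕ} {i : ℕ} (h : a < i) : G a b f g i = g (i - (a + 1)) := by
  have h1 : ¬ i < a := by omega
  have h2 : ¬ i = a := by omega
  simp [G, h1, h2]

noncomputable def gf (a b : ℕ) (α : Equiv.Perm (Fin a)) (β : Equiv.Perm (Fin b))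
    (i : Fin (a + 1 + b)) : Fin (a + 1 + b) :=
  if h : (i : ℕ) < a then (⟨b + α ⟨i, h⟩, by have := (α ⟨i, h⟩).isLt; omega⟩ : Fin (a+1+b))
  else if h2 : (i : ℕ) = a then ⟨a + b, by omega⟩
  else ⟨β ⟨(i : ℕ) - (a+1), by have := i.isLt; omega⟩, by
    have := (β ⟨(i : ℕ) - (a+1), by have := i.isLt; omega⟩).isLt; omega⟩

theorem gf_val_lt {a b : ℕ} (α : Equiv.Perm (Fin a)) (β : Equiv.Perm (Fin b))
    {i : Fin (a + 1 + b)} (h : (i : ℕ) < a) :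
    (gf a b α β i : ℕ) = b + α ⟨i, h⟩ := by simp [gf, h]

theorem gf_val_eq {a b : ℕ} (α : Equiv.Perm (Fin a)) (β : Equiv.Perm (Fin b))
    {i : Fin (a + 1 + b)} (h : (i : ℕ) = a) :
    (gf a b α β i : ℕ) = a + b := by simp [gf, h]

theorem gf_val_gt {a b : ℕ} (α : Equiv.Perm (Fin a)) (β : Equiv.Perm (Fin b))
    {i : Fin (a + 1 + b)} (h : a < (i : ℕ)) :
    (gf a b α β i : ℕ) = β ⟨(i : ℕ) - (a+1), by have := i.isLt; omega⟩ := by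
  have h1 : ¬ (i : ℕ) < a := by omega
  have h2 : ¬ (i : ℕ) = a := by omega
  simp [gf, h1, h2]

/-- Glue two permutations into one: `α` on the left (with values shifted up by `b`),
then the maximum, then `β`. -/
noncomputable def glue (a b : ℕ) (α : Equiv.Perm (Fin a)) (β : Equiv.Perm (Fin b)) :
    Equiv.Perm (Fin (a + 1 + b)) := by
  apply Equiv.ofBijective (gf a b α β)
  rw [Finite.injective_iff_bijective.symm]
  intro i j hij
  have hv : (gf a b α β i : ℕ) = (gf a b α β j : ℕ) := congrArg Fin.val hij
  have hi := i.isLt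
  have hj := j.isLt
  rcases lt_trichotomy (i : ℕ) a with h1 | h1 | h1 <;>
    rcases lt_trichotomy (j : ℕ) a with h2 | h2 | h2
  · rw [gf_val_lt α β h1, gf_val_lt α β h2] at hv
    have : α ⟨i, h1⟩ = α ⟨j, h2⟩ := Fin.ext (by omega)
    have := α.injective this
    simp only [Fin.mk.injEq] at this
    exact Fin.ext this
  · rw [gf_val_lt α β h1, gf_val_eq α β h2] at hv
    have := (α ⟨i, h1⟩).isLt; omega
  · rw [gf_val_lt α β h1, gf_val_gt α β h2] at hv
    have := (β ⟨(j : ℕ) - (a+1), by omega⟩).isLt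
    have := (α ⟨i, h1⟩).isLt
    omega
  · rw [gf_val_eq α β h1, gf_val_lt α β h2] at hv
    have := (α ⟨j, h2⟩).isLt; omega
  · exact Fin.ext (by omega)
  · rw [gf_val_eq α β h1, gf_val_gt α β h2] at hv
    have := (β ⟨(j : ℕ) - (a+1), by omega⟩).isLt
    omega
  · rw [gf_val_gt α β h1, gf_val_lt α β h2] at hv
    have := (β ⟨(i : ℕ) - (a+1), by omega⟩).isLt
    have := (α ⟨j, h2⟩).isLt
    omega
  · rw [gf_val_gt α β h1, gf_val_eq α β h2] at hv
    have := (β ⟨(i : ℕ) - (a+1), by omega⟩).isLt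
    omega
  · rw [gf_val_gt α β h1, gf_val_gt α β h2] at hv
    have : β ⟨(i : ℕ) - (a+1), by omega⟩ = β ⟨(j : ℕ) - (a+1), by omega⟩ := Fin.ext (by omega)
    have := β.injective this
    simp only [Fin.mk.injEq] at this
    exact Fin.ext (by omega)

theorem sv_glue {a b : ℕ} (α : Equiv.Perm (Fin a)) (β : Equiv.Perm (Fin b)) {i : ℕ}
    (h : i < a + 1 + b) : sv (a+1+b) (glue a b α β) i = G a b (sv a α) (sv b β) i := by
  rw [sv, dif_pos h]
  rw [glue, Equiv.ofBijective_apply]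
  rcases lt_trichotomy i a with h1 | h1 | h1
  · rw [G_lt h1, gf_val_lt α β h1, sv, dif_pos h1]
  · subst h1
    rw [G_eq, gf_val_eq α β rfl]
  · rw [G_gt h1, gf_val_gt α β h1, sv, dif_pos (by omega : i - (a+1) < b)]
section Gfacts

variable {a b : ℕ} {f g : ℕ → ℕ}

theorem rc_G_lt (hf : ∀ i, i < a → f i < a) (hg : ∀ j, j < b → g j < b)
    {i : ℕ} (h : i < a) : rc (a+1+b) (G a b f g) i = rc a f i + 1 := by
  unfold rc
  rw [cnt_add (a+1) b, cnt_add a 1]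
  have e1 : cnt a (fun j => i < j ∧ G a b f g i < G a b f g j) =
      cnt a (fun j => i < j ∧ f i < f j) := by
    apply cnt_congr
    intro j hj
    rw [G_lt h, G_lt hj]
    omega
  have e2 : cnt 1 (fun j => i < a + j ∧ G a b f g i < G a b f g (a + j)) = 1 := by
    apply cnt_true
    intro j hj
    have hj0 : j = 0 := by omega
    subst hj0
    rw [Nat.add_zero, G_lt h, G_eq]
    have := hf i h
    omega
  have e3 : cnt b (fun j => i < a + 1 + j ∧ G a b f g i < G a b f g (a + 1 + j)) = 0 := by
    apply cnt_false
    intro j hj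
    rw [G_lt h, G_gt (by omega : a < a + 1 + j)]
    have h1 : a + 1 + j - (a + 1) = j := by omega
    rw [h1]
    have := hg j hj
    omega
  rw [e1, e2, e3]

theorem rc_G_eq (hg : ∀ j, j < b → g j < b) : rc (a+1+b) (G a b f g) a = 0 := by
  apply cnt_false
  intro j hj
  rcases Nat.lt_or_ge a j with h | h
  · rw [G_eq, G_gt h]
    have := hg (j - (a+1)) (by omega)
    omega
  · omega

theorem rc_G_gt (hg : ∀ j, j < b → g j < b) {i : ℕ} (h : a < i) (hi : i < a + 1 + b) :
    rc (a+1+b) (G a b f g) i = rc b g (i - (a+1)) := by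
  unfold rc
  rw [cnt_add (a+1) b]
  have e1 : cnt (a+1) (fun j => i < j ∧ G a b f g i < G a b f g j) = 0 := by
    apply cnt_false
    intro j hj
    omega
  have e2 : cnt b (fun j => i < a + 1 + j ∧ G a b f g i < G a b f g (a + 1 + j)) =
      cnt b (fun j => i - (a+1) < j ∧ g (i - (a+1)) < g j) := by
    apply cnt_congr
    intro j hj
    rw [G_gt h, G_gt (by omega : a < a + 1 + j)]
    have h1 : a + 1 + j - (a + 1) = j := by omega
    rw [h1]
    omega
  rw [e1, e2]
  omega

theorem mmpN_G (hf : ∀ i, i < a → f i < a) (hg : ∀ j, j < b → g j < b) (ℓ : ℕ) :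
    mmpN (a+1+b) (ℓ+1) (G a b f g) = mmpN a ℓ f + mmpN b (ℓ+1) g := by
  unfold mmpN
  rw [cnt_add (a+1) b, cnt_add a 1]
  have e1 : cnt a (fun i => ℓ + 1 ≤ rc (a+1+b) (G a b f g) i) =
      cnt a (fun i => ℓ ≤ rc a f i) := by
    apply cnt_congr
    intro i hi
    rw [rc_G_lt hf hg hi]
    omega
  have e2 : cnt 1 (fun i => ℓ + 1 ≤ rc (a+1+b) (G a b f g) (a + i)) = 0 := by
    apply cnt_false
    intro i hi
    have hi0 : i = 0 := by omega
    subst hi0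
    simp only [Nat.add_zero]
    rw [rc_G_eq hg]
    omega
  have e3 : cnt b (fun i => ℓ + 1 ≤ rc (a+1+b) (G a b f g) (a + 1 + i)) =
      cnt b (fun i => ℓ + 1 ≤ rc b g i) := by
    apply cnt_congr
    intro i hi
    rw [rc_G_gt hg (by omega : a < a + 1 + i) (by omega)]
    have h1 : a + 1 + i - (a + 1) = i := by omega
    rw [h1]
  rw [e1, e2, e3]
  omega

theorem avN_G (hf : ∀ i, i < a → f i < a) (hg : ∀ j, j < b → g j < b) :
    AvN (a+1+b) (G a b f g) ↔ AvN a f ∧ AvN b g := by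
  constructor
  · intro h
    constructor
    · intro x y z hxy hyz hz
      have := h x y z hxy hyz (by omega)
      rw [G_lt (by omega : x < a), G_lt (by omega : y < a), G_lt hz] at this
      omega
    · intro x y z hxy hyz hz
      have := h (a+1+x) (a+1+y) (a+1+z) (by omega) (by omega) (by omega)
      rw [G_gt (by omega : a < a+1+x), G_gt (by omega : a < a+1+y),
        G_gt (by omega : a < a+1+z)] at this
      have e1 : a + 1 + x - (a+1) = x := by omega
      have e2 : a + 1 + y - (a+1) = y := by omega
      have e3 : a + 1 + z - (a+1) = z := by omega
      rw [e1, e2, e3] at this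
      omega
  · rintro ⟨hA, hB⟩ x y z hxy hyz hz
    rcases lt_trichotomy z a with hz' | hz' | hz'
    · -- all three in A
      have := hA x y z hxy hyz hz'
      rw [G_lt (by omega : x < a), G_lt (by omega : y < a), G_lt hz']
      omega
    · -- z is the max position
      subst hz'
      rw [G_eq, G_lt (by omega : y < z)]
      have := hf y (by omega)
      omega
    · rcases lt_trichotomy y a with hy' | hy' | hy'
      · -- x, y in A, z in B
        rw [G_lt (by omega : x < a), G_gt hz']
        have := hg (z - (a+1)) (by omega)
        have := hf x (by omega)
        omega
      · -- y is max position
        subst hy'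
        rw [G_gt hz']
        rcases lt_trichotomy x y with hx' | hx' | hx'
        · rw [G_lt hx']
          have := hg (z - (y+1)) (by omega)
          omega
        · omega
        · omega
      · rcases lt_trichotomy x a with hx' | hx' | hx'
        · -- x in A, y z in B
          rw [G_lt hx', G_gt hz']
          have := hg (z - (a+1)) (by omega)
          have := hf x hx'
          omega
        · -- x max
          subst hx'
          rw [G_eq, G_gt hz']
          have := hg (z - (x+1)) (by omega)
          omega
        · -- all in B
          have := hB (x - (a+1)) (y - (a+1)) (z - (a+1)) (by omega) (by omega) (by omega)
          rw [G_gt (by omega : a < x), G_gt (by omega : a < y), G_gt hz']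
          omega

end Gfacts
section GluePerm

variable {a b : ℕ} (α : Equiv.Perm (Fin a)) (β : Equiv.Perm (Fin b))

theorem svα_lt : ∀ i, i < a → sv a α i < a := fun _ h => sv_lt α h

theorem avoids_glue :
    Avoids132 (a+1+b) (glue a b α β) ↔ Avoids132 a α ∧ Avoids132 b β := by
  rw [avoids_iff, avoids_iff α, avoids_iff β,
    avN_congr (fun i hi => sv_glue α β hi),
    avN_G (svα_lt α) (svα_lt β)]

theorem mmp_glue (ℓ : ℕ) :
    mmp (a+1+b) (ℓ+1) 0 0 0 (glue a b α β) =
      mmp a ℓ 0 0 0 α + mmp b (ℓ+1) 0 0 0 β := by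
  rw [mmp_eq, mmp_eq, mmp_eq,
    mmpN_congr (fun i hi => sv_glue α β hi),
    mmpN_G (svα_lt α) (svα_lt β)]

theorem sv_glue_max : sv (a+1+b) (glue a b α β) a = a + b := by
  rw [sv_glue α β (by omega), G_eq]

theorem decomp {σ : Equiv.Perm (Fin (a+1+b))} (hAv : Avoids132 (a+1+b) σ)
    (hmax : sv (a+1+b) σ a = a + b) :
    ∃ (α : Equiv.Perm (Fin a)) (β : Equiv.Perm (Fin b)), glue a b α β = σ := by
  classical
  obtain ⟨f, hfv⟩ : ∃ f : ℕ → ℕ, ∀ i, f i = sv (a+1+b) σ i := ⟨_, fun _ => rfl⟩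
  have hmax' : f a = a + b := by rw [hfv]; exact hmax
  have hA : AvN (a+1+b) f := by
    rw [avN_congr (fun i _ => hfv i)]
    exact (avoids_iff σ).mp hAv
  have hlt : ∀ i, i < a+1+b → f i < a+1+b := fun i h => by rw [hfv]; exact sv_lt σ h
  have finj : ∀ x y, x < a+1+b → y < a+1+b → f x = f y → x = y := fun x y hx hy h =>
    sv_inj σ hx hy (by rw [← hfv, ← hfv]; exact h)
  have hfneq : ∀ k, k < a+1+b → k ≠ a → f k ≠ a + b := by
    intro k hk hka hcon
    exact hka (finj k a hk (by omega) (hcon.trans hmax'.symm))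
  have h1 : ∀ i k, i < a → a < k → k < a+1+b → f k < f i := by
    intro i k hi hak hk
    have hik : f i ≠ f k := fun h => by
      have := finj i k (by omega) hk h; omega
    have hfk : f k < a + b := by
      have := hlt k hk
      have := hfneq k hk (by omega)
      omega
    have := hA i a k hi hak hk
    rw [hmax'] at this
    omega
  have h2 : ∀ k, a < k → k < a+1+b → f k < b := by
    intro k hak hk
    have hcard := Finset.card_le_card_of_injOn
      (s := Finset.range (a+1)) (t := Finset.Ioo (f k) (a+1+b)) f ?_ ?_
    · rw [Finset.card_range, Nat.card_Ioo] at hcard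
      have := hlt k hk
      omega
    · intro i hi
      simp only [Finset.mem_coe, Finset.mem_range] at hi
      simp only [Finset.mem_coe, Finset.mem_Ioo]
      refine ⟨?_, hlt i (by omega)⟩
      rcases Nat.lt_or_ge i a with h | h
      · exact h1 i k h hak hk
      · have : i = a := by omega
        subst this
        have := hlt k hk
        have := hfneq k hk (by omega)
        omega
    · intro x hx y hy hxy
      simp only [Finset.coe_range, Set.mem_Iio] at hx hy
      exact finj x y (by omega) (by omega) hxy
  have h3 : ∀ i, i < a → b ≤ f i := by
    intro i hi
    have hcard := Finset.card_le_card_of_injOn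
      (s := Finset.Ico (a+1) (a+1+b)) (t := Finset.range (f i)) f ?_ ?_
    · rw [Finset.card_range, Nat.card_Ico] at hcard
      omega
    · intro k hk
      simp only [Finset.mem_coe, Finset.mem_Ico] at hk
      simp only [Finset.mem_coe, Finset.mem_range]
      exact h1 i k hi (by omega) (by omega)
    · intro x hx y hy hxy
      simp only [Finset.coe_Ico, Set.mem_Ico] at hx hy
      exact finj x y (by omega) (by omega) hxy
  have hflt : ∀ i, i < a → f i - b < a := by
    intro i hi
    have := hlt i (by omega)
    have := hfneq i (by omega) (by omega)
    have := h3 i hi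
    omega
  let αf : Fin a → Fin a := fun i => ⟨f i - b, hflt i i.isLt⟩
  have hαinj : Function.Injective αf := by
    intro x y hxy
    simp only [αf, Fin.mk.injEq] at hxy
    have hbx := h3 x x.isLt
    have hby := h3 y y.isLt
    have hfe : f x = f y := by omega
    exact Fin.ext (finj x y (by have := x.isLt; omega) (by have := y.isLt; omega) hfe)
  let α : Equiv.Perm (Fin a) := Equiv.ofBijective αf (Finite.injective_iff_bijective.mp hαinj)
  let βf : Fin b → Fin b := fun j => ⟨f (a+1+j), h2 (a+1+j) (by omega) (by have := j.isLt; omega)⟩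
  have hβinj : Function.Injective βf := by
    intro x y hxy
    simp only [βf, Fin.mk.injEq] at hxy
    have := finj (a+1+(x:ℕ)) (a+1+(y:ℕ)) (by have := x.isLt; omega)
      (by have := y.isLt; omega) hxy
    exact Fin.ext (by omega)
  let β : Equiv.Perm (Fin b) := Equiv.ofBijective βf (Finite.injective_iff_bijective.mp hβinj)
  refine ⟨α, β, ?_⟩
  apply Equiv.ext
  intro i
  apply Fin.ext
  have hσi : ((σ i : Fin (a+1+b)) : ℕ) = f i := by rw [hfv]; exact (sv_coe σ i).symm
  rw [hσi, glue, Equiv.ofBijective_apply]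
  rcases lt_trichotomy (i : ℕ) a with h | h | h
  · rw [gf_val_lt α β h]
    have he : α ⟨(i : ℕ), h⟩ = αf ⟨(i : ℕ), h⟩ := rfl
    rw [he]
    simp only [αf]
    have := h3 i h
    omega
  · rw [gf_val_eq α β h, h, hmax']
  · rw [gf_val_gt α β h]
    have he : β ⟨(i : ℕ) - (a+1), by have := i.isLt; omega⟩ =
        βf ⟨(i : ℕ) - (a+1), by have := i.isLt; omega⟩ := rfl
    rw [he]
    simp only [βf]
    congr 1
    have := i.isLt
    omega

end GluePerm
section PermCount

/-- Number of 132-avoiding permutations with statistic `k`. -/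
noncomputable def Pc (n ℓ k : ℕ) : ℕ :=
  Nat.card {σ : Equiv.Perm (Fin n) | Avoids132 n σ ∧ mmp n ℓ 0 0 0 σ = k}

open scoped Classical in
theorem Pc_eq (n ℓ k : ℕ) :
    Pc n ℓ k = (Finset.univ.filter
      (fun σ : Equiv.Perm (Fin n) => Avoids132 n σ ∧ mmp n ℓ 0 0 0 σ = k)).card := by
  rw [Pc, Nat.card_eq_fintype_card, ← Fintype.card_subtype]
  exact Fintype.card_congr' rfl

theorem cnt_zero (P : ℕ → Prop) : cnt 0 P = 0 := by
  simp [cnt]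

theorem Pc_base (ℓ k : ℕ) : Pc 0 ℓ k = if k = 0 then 1 else 0 := by
  classical
  rw [Pc_eq]
  have hm : ∀ σ : Equiv.Perm (Fin 0), mmp 0 ℓ 0 0 0 σ = 0 := by
    intro σ
    rw [mmp_eq]
    exact cnt_zero _
  have hA : ∀ σ : Equiv.Perm (Fin 0), Avoids132 0 σ := by
    intro σ i
    exact absurd i.isLt (by omega)
  by_cases hk : k = 0
  · subst hk
    rw [Finset.filter_true_of_mem (fun σ _ => ⟨hA σ, hm σ⟩)]
    simp
  · rw [Finset.filter_false_of_mem (fun σ _ => by simp [hm σ, hA σ, Ne.symm hk, hk])]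
    simp [hk]

theorem Pc_thresh_zero (n k : ℕ) :
    Pc n 0 k = if k = n then ∑ k' ∈ Finset.range (n+1), Pc n 1 k' else 0 := by
  classical
  rw [Pc_eq]
  by_cases hk : k = n
  · rw [if_pos hk]
    rw [Finset.filter_congr (q := fun σ : Equiv.Perm (Fin n) => Avoids132 n σ)
      (fun σ _ => by simp [mmp_zero σ, hk])]
    rw [Finset.card_eq_sum_card_fiberwise
      (f := fun σ => mmp n 1 0 0 0 σ) (t := Finset.range (n+1))
      (fun σ _ => Finset.mem_range.mpr (by
        show mmp n 1 0 0 0 σ < n + 1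
        have := mmp_le (ℓ := 1) σ; omega))]
    apply Finset.sum_congr rfl
    intro k' _
    rw [Pc_eq, Finset.filter_filter]
  · rw [if_neg hk]
    rw [Finset.filter_false_of_mem (fun σ _ => by
      rw [mmp_zero σ]
      tauto)]
    simp

theorem glue_injective (a b : ℕ) (α α' : Equiv.Perm (Fin a)) (β β' : Equiv.Perm (Fin b))
    (h : glue a b α β = glue a b α' β') : α = α' ∧ β = β' := by
  constructor
  · apply Equiv.ext
    intro i
    have hi : (i : ℕ) < a + 1 + b := by have := i.isLt; omega
    have hval : (gf a b α β ⟨i, hi⟩ : ℕ) = (gf a b α' β' ⟨i, hi⟩ : ℕ) := by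
      have := congrArg (fun (σ : Equiv.Perm (Fin (a+1+b))) => (σ ⟨i, hi⟩ : ℕ)) h
      simpa [glue] using this
    rw [gf_val_lt α β i.isLt, gf_val_lt α' β' i.isLt] at hval
    apply Fin.ext
    have e : (⟨((⟨(i:ℕ), hi⟩ : Fin (a+1+b)) : ℕ), i.isLt⟩ : Fin a) = i := Fin.ext rfl
    rw [e] at hval
    omega
  · apply Equiv.ext
    intro j
    have hj : a + 1 + (j : ℕ) < a + 1 + b := by have := j.isLt; omega
    have hval : (gf a b α β ⟨a+1+j, hj⟩ : ℕ) = (gf a b α' β' ⟨a+1+j, hj⟩ : ℕ) := by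
      have := congrArg (fun (σ : Equiv.Perm (Fin (a+1+b))) => (σ ⟨a+1+j, hj⟩ : ℕ)) h
      simpa [glue] using this
    rw [gf_val_gt α β (by show a < a+1+(j:ℕ); omega),
      gf_val_gt α' β' (by show a < a+1+(j:ℕ); omega)] at hval
    apply Fin.ext
    have e : (⟨((⟨a+1+(j:ℕ), hj⟩ : Fin (a+1+b)) : ℕ) - (a+1),
        by show a+1+(j:ℕ)-(a+1) < b; have := j.isLt; omega⟩
        : Fin b) = j := Fin.ext (by show a+1+(j:ℕ)-(a+1) = (j:ℕ); omega)
    rw [e] at hval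
    exact hval

open scoped Classical in
theorem card_filter_prod {γ δ : Type*} [Fintype γ] [Fintype δ] (p : γ → Prop) (q : δ → Prop) :
    (Finset.univ.filter (fun x : γ × δ => p x.1 ∧ q x.2)).card =
      (Finset.univ.filter p).card * (Finset.univ.filter q).card := by
  rw [← Fintype.card_subtype, ← Fintype.card_subtype, ← Fintype.card_subtype,
    ← Fintype.card_prod]
  exact Fintype.card_congr (Equiv.subtypeProdEquivProd)

open scoped Classical in
theorem card_fiber (a b ℓ k : ℕ) :
    (Finset.univ.filter (fun σ : Equiv.Perm (Fin (a+1+b)) =>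
      (Avoids132 (a+1+b) σ ∧ mmp (a+1+b) (ℓ+1) 0 0 0 σ = k) ∧ sv (a+1+b) σ a = a + b)).card
    = ∑ k1 ∈ Finset.range (k+1), Pc a ℓ k1 * Pc b (ℓ+1) (k-k1) := by
  have hbij : (Finset.univ.filter (fun p : Equiv.Perm (Fin a) × Equiv.Perm (Fin b) =>
      (Avoids132 a p.1 ∧ Avoids132 b p.2) ∧
        mmp a ℓ 0 0 0 p.1 + mmp b (ℓ+1) 0 0 0 p.2 = k)).card
      = (Finset.univ.filter (fun σ : Equiv.Perm (Fin (a+1+b)) =>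
      (Avoids132 (a+1+b) σ ∧ mmp (a+1+b) (ℓ+1) 0 0 0 σ = k) ∧ sv (a+1+b) σ a = a + b)).card := by
    apply Finset.card_bij (fun p _ => glue a b p.1 p.2)
    · intro p hp
      simp only [Finset.mem_filter, Finset.mem_univ, true_and] at hp ⊢
      refine ⟨⟨(avoids_glue p.1 p.2).mpr ⟨hp.1.1, hp.1.2⟩, ?_⟩, sv_glue_max p.1 p.2⟩
      rw [mmp_glue p.1 p.2 ℓ]
      exact hp.2
    · intro p hp q hq hpq
      obtain ⟨h1, h2⟩ := glue_injective a b p.1 q.1 p.2 q.2 hpq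
      exact Prod.ext h1 h2
    · intro σ hσ
      simp only [Finset.mem_filter, Finset.mem_univ, true_and] at hσ
      obtain ⟨⟨hAv, hmm⟩, hmx⟩ := hσ
      obtain ⟨α, β, hg⟩ := decomp hAv hmx
      refine ⟨(α, β), ?_, hg⟩
      simp only [Finset.mem_filter, Finset.mem_univ, true_and]
      have hA := (avoids_glue α β).mp (hg ▸ hAv)
      refine ⟨hA, ?_⟩
      have := mmp_glue α β ℓ
      rw [hg, hmm] at this
      omega
  rw [← hbij]
  rw [Finset.card_eq_sum_card_fiberwise
    (f := fun p => mmp a ℓ 0 0 0 p.1) (t := Finset.range (k+1))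
    (fun p hp => Finset.mem_range.mpr (by
      simp only [Finset.mem_coe, Finset.mem_filter, Finset.mem_univ, true_and] at hp
      obtain ⟨-, h2⟩ := hp
      show mmp a ℓ 0 0 0 p.1 < k + 1
      omega))]
  apply Finset.sum_congr rfl
  intro k1 hk1
  rw [Finset.mem_range] at hk1
  rw [Finset.filter_filter]
  rw [Finset.filter_congr (q := fun p : Equiv.Perm (Fin a) × Equiv.Perm (Fin b) =>
      (Avoids132 a p.1 ∧ mmp a ℓ 0 0 0 p.1 = k1) ∧
      (Avoids132 b p.2 ∧ mmp b (ℓ+1) 0 0 0 p.2 = k - k1))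
    (fun p _ => by constructor
                   · rintro ⟨⟨⟨h1, h2⟩, h3⟩, h4⟩
                     exact ⟨⟨h1, h4⟩, ⟨h2, by omega⟩⟩
                   · rintro ⟨⟨h1, h4⟩, h2, h5⟩
                     exact ⟨⟨⟨h1, h2⟩, by omega⟩, h4⟩)]
  have hcp := card_filter_prod
    (fun α : Equiv.Perm (Fin a) => Avoids132 a α ∧ mmp a ℓ 0 0 0 α = k1)
    (fun β : Equiv.Perm (Fin b) => Avoids132 b β ∧ mmp b (ℓ+1) 0 0 0 β = k - k1)
  rw [Pc_eq, Pc_eq]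
  convert hcp using 2 <;> congr!

open scoped Classical in
theorem pos_eq_iff {n : ℕ} (σ : Equiv.Perm (Fin (n+1))) {a : ℕ} (ha : a < n+1) :
    ((σ.symm ⟨n, by omega⟩ : Fin (n+1)) : ℕ) = a ↔ sv (n+1) σ a = n := by
  rw [sv, dif_pos ha]
  constructor
  · intro h
    have : σ.symm ⟨n, by omega⟩ = ⟨a, ha⟩ := Fin.ext h
    rw [Equiv.symm_apply_eq] at this
    rw [← this]
  · intro h
    have h1 : σ ⟨a, ha⟩ = ⟨n, by omega⟩ := Fin.ext h
    have h2 : σ.symm ⟨n, by omega⟩ = ⟨a, ha⟩ := (Equiv.symm_apply_eq σ).mpr h1.symm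
    rw [h2]

open scoped Classical in
theorem card_fiber' (N a b ℓ k : ℕ) (h : a + 1 + b = N) :
    (Finset.univ.filter (fun σ : Equiv.Perm (Fin N) =>
      (Avoids132 N σ ∧ mmp N (ℓ+1) 0 0 0 σ = k) ∧ sv N σ a = a + b)).card
    = ∑ k1 ∈ Finset.range (k+1), Pc a ℓ k1 * Pc b (ℓ+1) (k-k1) := by
  subst h
  exact card_fiber a b ℓ k

theorem Pc_rec (n ℓ k : ℕ) :
    Pc (n+1) (ℓ+1) k = ∑ a ∈ Finset.range (n+1), ∑ k1 ∈ Finset.range (k+1),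
      Pc a ℓ k1 * Pc (n-a) (ℓ+1) (k-k1) := by
  classical
  rw [Pc_eq]
  rw [Finset.card_eq_sum_card_fiberwise
    (f := fun σ : Equiv.Perm (Fin (n+1)) => ((σ.symm ⟨n, by omega⟩ : Fin (n+1)) : ℕ))
    (t := Finset.range (n+1))
    (fun σ _ => Finset.mem_range.mpr (σ.symm ⟨n, by omega⟩).isLt)]
  apply Finset.sum_congr rfl
  intro a ha
  rw [Finset.mem_range] at ha
  rw [Finset.filter_filter]
  rw [Finset.filter_congr (q := fun σ : Equiv.Perm (Fin (n+1)) =>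
      (Avoids132 (n+1) σ ∧ mmp (n+1) (ℓ+1) 0 0 0 σ = k) ∧ sv (n+1) σ a = a + (n-a))
    (fun σ _ => by
      rw [and_congr_right_iff]
      intro _
      rw [pos_eq_iff σ ha]
      have : a + (n - a) = n := by omega
      rw [this])]
  exact card_fiber' (n+1) a (n-a) ℓ k (by omega)

end PermCount
section DyckLists

/-- prefix count of down-steps -/
def cf (p : List Bool) (i : ℕ) : ℕ := (p.take i).count false
/-- prefix count of up-steps -/
def ct (p : List Bool) (i : ℕ) : ℕ := (p.take i).count true
/-- value of the i-th step -/
def pv (p : List Bool) (i : ℕ) : Bool := p.getD i true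

theorem downSteps_eq (ℓ : ℕ) (p : List Bool) :
    downStepsAtLeast ℓ p =
      cnt p.length (fun i => pv p i = false ∧ cf p (i+1) + ℓ ≤ ct p (i+1)) := by
  apply natCard_setOf
  intro i
  unfold pv cf ct
  rw [List.getD_eq_getElem p true i.isLt, List.get_eq_getElem]

theorem count_add_count (p : List Bool) : p.count false + p.count true = p.length := by
  induction p with
  | nil => simp
  | cons x p ih =>
    rw [List.count_cons, List.count_cons]
    cases x <;> simp <;> omega

theorem count_eq_cnt (p : List Bool) :
    p.count false = cnt p.length (fun i => pv p i = false) := by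
  induction p with
  | nil => simp [cnt]
  | cons x p ih =>
    have hl : (x :: p).length = 1 + p.length := by simp; omega
    rw [hl, cnt_add, cnt_one, List.count_cons]
    have h0 : pv (x :: p) 0 = x := List.getD_cons_zero
    have hs : cnt p.length (fun i => pv (x :: p) (1 + i) = false) =
        cnt p.length (fun i => pv p i = false) := by
      apply cnt_congr
      intro i hi
      rw [show 1 + i = i + 1 by omega]
      rw [show pv (x :: p) (i+1) = pv p i from List.getD_cons_succ]
    rw [h0, hs, ← ih]
    cases x <;> simp <;> omega

theorem cnt_mono {m : ℕ} {P Q : ℕ → Prop} (h : ∀ i, i < m → P i → Q i) :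
    cnt m P ≤ cnt m Q := by
  classical
  unfold cnt
  apply Finset.sum_le_sum
  intro i hi
  by_cases hp : P i
  · simp [hp, h i (Finset.mem_range.mp hi) hp]
  · simp [hp]

theorem downSteps_le (ℓ : ℕ) (p : List Bool) :
    downStepsAtLeast ℓ p ≤ p.count false := by
  rw [downSteps_eq, count_eq_cnt]
  exact cnt_mono (fun i _ h => h.1)

theorem isDyck_count {p : List Bool} (h : IsDyck p) : 2 * p.count false = p.length := by
  have := count_add_count p
  have := h.2
  omega

/-- The canonical composite path. -/
def comp (q r : List Bool) : List Bool := (true :: q) ++ (false :: r)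

theorem comp_eq (q r : List Bool) : comp q r = true :: (q ++ false :: r) := by
  simp [comp]

theorem comp_length (q r : List Bool) : (comp q r).length = q.length + r.length + 2 := by
  simp [comp]; omega

theorem comp_take1 (q r : List Bool) {i : ℕ} (h : i ≤ q.length) :
    (comp q r).take (1 + i) = true :: q.take i := by
  rw [comp_eq, show (1+i) = i+1 by omega, List.take_succ_cons]
  rw [List.take_append_of_le_length h]

theorem comp_take2 (q r : List Bool) {i : ℕ} :
    (comp q r).take (q.length + 2 + i) = true :: q ++ false :: r.take i := by
  rw [comp_eq, show q.length + 2 + i = (q.length + 1 + i) + 1 by omega, List.take_succ_cons]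
  rw [show q.length + 1 + i = q.length + (1 + i) by omega, List.take_add]
  rw [List.take_left, List.drop_left]
  rw [show (1 + i) = i+1 by omega, List.take_succ_cons]
  simp

theorem comp_cf1 (q r : List Bool) {i : ℕ} (h : i ≤ q.length) :
    cf (comp q r) (1 + i) = cf q i := by
  unfold cf
  rw [comp_take1 q r h, List.count_cons]
  simp

theorem comp_ct1 (q r : List Bool) {i : ℕ} (h : i ≤ q.length) :
    ct (comp q r) (1 + i) = 1 + ct q i := by
  unfold ct
  rw [comp_take1 q r h, List.count_cons]
  simp; omega

theorem comp_cf2 (q r : List Bool) {i : ℕ} :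
    cf (comp q r) (q.length + 2 + i) = q.count false + 1 + cf r i := by
  unfold cf
  rw [comp_take2 q r, List.count_append, List.count_cons, List.count_cons]
  simp; omega

theorem comp_ct2 (q r : List Bool) {i : ℕ} :
    ct (comp q r) (q.length + 2 + i) = 1 + q.count true + ct r i := by
  unfold ct
  rw [comp_take2 q r, List.count_append, List.count_cons, List.count_cons]
  simp; omega

theorem comp_count_false (q r : List Bool) :
    (comp q r).count false = q.count false + 1 + r.count false := by
  rw [comp, List.count_append, List.count_cons, List.count_cons]
  simp; omega

theorem comp_count_true (q r : List Bool) :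
    (comp q r).count true = 1 + q.count true + r.count true := by
  rw [comp, List.count_append, List.count_cons, List.count_cons]
  simp; omega

theorem comp_pv0 (q r : List Bool) : pv (comp q r) 0 = true := by
  rw [comp_eq]; exact List.getD_cons_zero

theorem comp_pv1 (q r : List Bool) {i : ℕ} (h : i < q.length) :
    pv (comp q r) (1 + i) = pv q i := by
  rw [comp_eq, show 1 + i = i + 1 by omega]
  unfold pv
  rw [List.getD_cons_succ]
  exact List.getD_append q (false :: r) true i h

theorem comp_pvmid (q r : List Bool) : pv (comp q r) (q.length + 1) = false := by
  rw [comp_eq]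
  unfold pv
  rw [show q.length + 1 = q.length + 1 by rfl, List.getD_cons_succ]
  rw [List.getD_append_right q (false :: r) true q.length (le_refl _)]
  simp

theorem comp_pv2 (q r : List Bool) {i : ℕ} :
    pv (comp q r) (q.length + 2 + i) = pv r i := by
  rw [comp_eq]
  unfold pv
  rw [show q.length + 2 + i = (q.length + 1 + i) + 1 by omega, List.getD_cons_succ]
  rw [List.getD_append_right q (false :: r) true (q.length + 1 + i) (by omega)]
  rw [show q.length + 1 + i - q.length = i + 1 by omega, List.getD_cons_succ]

theorem dyck_nil : IsDyck [] := by
  constructor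
  · intro i; simp
  · simp

theorem dyck_prefix_le {p : List Bool} (h : IsDyck p) (i : ℕ) : cf p i ≤ ct p i := h.1 i

theorem dyck_comp {q r : List Bool} (hq : IsDyck q) (hr : IsDyck r) : IsDyck (comp q r) := by
  have hqb := hq.2
  have hrb := hr.2
  constructor
  · intro i
    show cf (comp q r) i ≤ ct (comp q r) i
    rcases Nat.eq_zero_or_pos i with h0 | h0
    · subst h0; simp [cf, ct]
    rcases Nat.lt_or_ge i (q.length + 2) with h1 | h1
    · -- i = 1 + i' with i' ≤ q.length
      obtain ⟨i', rfl⟩ : ∃ i', i = 1 + i' := ⟨i - 1, by omega⟩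
      have hi' : i' ≤ q.length := by omega
      rw [comp_cf1 q r hi', comp_ct1 q r hi']
      have h2 := hq.1 i'
      unfold cf ct
      omega
    · rcases Nat.lt_or_ge i ((comp q r).length + 1) with h2 | h2
      · obtain ⟨i', rfl⟩ : ∃ i', i = q.length + 2 + i' := ⟨i - (q.length + 2), by omega⟩
        rw [comp_cf2 q r, comp_ct2 q r]
        have h2 := hr.1 i'
        unfold cf ct
        omega
      · have hlen : (comp q r).length ≤ i := by omega
        unfold cf ct
        rw [List.take_of_length_le hlen]
        rw [comp_count_false, comp_count_true]
        omega
  · rw [comp_count_false, comp_count_true]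
    omega

theorem stat_comp {q r : List Bool} (hq : IsDyck q) (ℓ : ℕ) :
    downStepsAtLeast (ℓ+1) (comp q r) =
      downStepsAtLeast ℓ q + downStepsAtLeast (ℓ+1) r := by
  have hqb := hq.2
  rw [downSteps_eq, downSteps_eq, downSteps_eq]
  have hlen : (comp q r).length = (1 + q.length) + (1 + r.length) := by
    rw [comp_length]; omega
  rw [hlen, cnt_add, cnt_add 1 q.length, cnt_add 1 r.length]
  have e0 : cnt 1 (fun i => pv (comp q r) i = false ∧
      cf (comp q r) (i+1) + (ℓ+1) ≤ ct (comp q r) (i+1)) = 0 := by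
    apply cnt_false
    intro i hi
    have : i = 0 := by omega
    subst this
    rw [comp_pv0]
    simp
  have e1 : cnt q.length (fun i => pv (comp q r) (1 + i) = false ∧
      cf (comp q r) ((1 + i)+1) + (ℓ+1) ≤ ct (comp q r) ((1 + i)+1)) =
      cnt q.length (fun i => pv q i = false ∧ cf q (i+1) + ℓ ≤ ct q (i+1)) := by
    apply cnt_congr
    intro i hi
    rw [comp_pv1 q r hi]
    rw [show (1 + i) + 1 = 1 + (i + 1) by omega]
    rw [comp_cf1 q r (by omega), comp_ct1 q r (by omega)]
    rw [and_congr_right_iff]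
    intro _
    omega
  have e2 : cnt 1 (fun i => pv (comp q r) (1 + q.length + i) = false ∧
      cf (comp q r) ((1 + q.length + i)+1) + (ℓ+1) ≤ ct (comp q r) ((1 + q.length + i)+1)) = 0 := by
    apply cnt_false
    intro i hi
    have : i = 0 := by omega
    subst this
    rw [show 1 + q.length + 0 = q.length + 1 by omega,
      show q.length + 1 + 1 = q.length + 2 + 0 by omega]
    rw [comp_pvmid q r, comp_cf2 q r, comp_ct2 q r]
    have hc0 : cf r 0 = 0 := by simp [cf]
    have ht0 : ct r 0 = 0 := by simp [ct]
    intro hcon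
    omega
  have e3 : cnt r.length (fun i => pv (comp q r) (1 + q.length + (1 + i)) = false ∧
      cf (comp q r) ((1 + q.length + (1 + i))+1) + (ℓ+1) ≤
        ct (comp q r) ((1 + q.length + (1 + i))+1)) =
      cnt r.length (fun i => pv r i = false ∧ cf r (i+1) + (ℓ+1) ≤ ct r (i+1)) := by
    apply cnt_congr
    intro i hi
    rw [show 1 + q.length + (1 + i) = q.length + 2 + i by omega,
      show q.length + 2 + i + 1 = q.length + 2 + (i + 1) by omega]
    rw [comp_pv2 q r, comp_cf2 q r, comp_ct2 q r]
    rw [and_congr_right_iff]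
    intro _
    omega
  rw [e0, e1, e2, e3]
  omega

theorem stat_zero {p : List Bool} (h : IsDyck p) :
    downStepsAtLeast 0 p = p.count false := by
  rw [downSteps_eq, count_eq_cnt]
  apply cnt_congr
  intro i hi
  unfold cf ct
  have h2 := h.1 (i+1)
  constructor
  · rintro ⟨h1, -⟩; exact h1
  · intro h1; exact ⟨h1, by omega⟩

end DyckLists
section Fret

open scoped Classical in
/-- The first-return time of a Dyck path (with a junk fallback). -/
noncomputable def fret (p : List Bool) : ℕ :=
  Nat.find (⟨p.length + 2, Or.inr rfl⟩ :
    ∃ i, (2 ≤ i ∧ cf p i = ct p i) ∨ i = p.length + 2)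

open scoped Classical in
theorem fret_spec {p : List Bool} (hd : IsDyck p) (hl : 2 ≤ p.length) :
    (2 ≤ fret p ∧ fret p ≤ p.length ∧ cf p (fret p) = ct p (fret p)) ∧
      (∀ i, 1 ≤ i → i < fret p → cf p i < ct p i) := by
  have hP : ∀ i, ((2 ≤ i ∧ cf p i = ct p i) ∨ i = p.length + 2) ↔
      ((2 ≤ i ∧ cf p i = ct p i) ∨ i = p.length + 2) := fun _ => Iff.rfl
  have hple : fret p ≤ p.length := by
    apply Nat.find_le
    left
    refine ⟨hl, ?_⟩
    unfold cf ct
    rw [List.take_of_length_le (le_refl _)]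
    exact hd.2
  have hspec := Nat.find_spec (⟨p.length + 2, Or.inr rfl⟩ :
    ∃ i, (2 ≤ i ∧ cf p i = ct p i) ∨ i = p.length + 2)
  rw [show Nat.find _ = fret p from rfl] at hspec
  rcases hspec with ⟨h2, hbal⟩ | hcon
  · refine ⟨⟨h2, hple, hbal⟩, ?_⟩
    intro i h1 hilt
    have hle : cf p i ≤ ct p i := hd.1 i
    rcases Nat.lt_or_ge i 2 with hi2 | hi2
    · have : i = 1 := by omega
      subst this
      have hsum : cf p 1 + ct p 1 = 1 := by
        unfold cf ct
        rw [count_add_count, List.length_take]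
        omega
      omega
    · have := Nat.find_min (⟨p.length + 2, Or.inr rfl⟩ :
        ∃ i, (2 ≤ i ∧ cf p i = ct p i) ∨ i = p.length + 2) hilt
      push_neg at this
      have := this.1 hi2
      omega
  · omega

open scoped Classical in
theorem fret_comp {q r : List Bool} (hq : IsDyck q) :
    fret (comp q r) = q.length + 2 := by
  have hbal : cf (comp q r) (q.length + 2) = ct (comp q r) (q.length + 2) := by
    rw [show q.length + 2 = q.length + 2 + 0 by omega, comp_cf2, comp_ct2]
    have : cf r 0 = 0 := by simp [cf]
    have : ct r 0 = 0 := by simp [ct]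
    have := hq.2
    simp [cf, ct]
    omega
  apply le_antisymm
  · apply Nat.find_le
    left
    exact ⟨by omega, hbal⟩
  · by_contra hcon
    push_neg at hcon
    have hlen : (comp q r).length = q.length + r.length + 2 := comp_length q r
    have hspec := Nat.find_spec (⟨(comp q r).length + 2, Or.inr rfl⟩ :
      ∃ i, (2 ≤ i ∧ cf (comp q r) i = ct (comp q r) i) ∨ i = (comp q r).length + 2)
    rw [show Nat.find _ = fret (comp q r) from rfl] at hspec
    rcases hspec with ⟨h2, hbal2⟩ | hcon2
    · obtain ⟨i', hi'⟩ : ∃ i', fret (comp q r) = 1 + i' := ⟨fret (comp q r) - 1, by omega⟩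
      have hi'le : i' ≤ q.length := by omega
      rw [hi', comp_cf1 q r hi'le, comp_ct1 q r hi'le] at hbal2
      have hle : cf q i' ≤ ct q i' := hq.1 i'
      omega
    · omega

theorem pv_eq_getElem {p : List Bool} {i : ℕ} (h : i < p.length) : pv p i = p[i] :=
  List.getD_eq_getElem p true h

theorem take_pv {p : List Bool} {i : ℕ} (h : i < p.length) :
    p.take (i+1) = p.take i ++ [pv p i] := by
  rw [List.take_succ, List.getElem?_eq_getElem h, pv_eq_getElem h]
  rfl

theorem drop_pv {p : List Bool} {i : ℕ} (h : i < p.length) :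
    p.drop i = pv p i :: p.drop (i+1) := by
  rw [List.drop_eq_getElem_cons h, pv_eq_getElem h]

theorem cf_succ {p : List Bool} {i : ℕ} (h : i < p.length) :
    cf p (i+1) = cf p i + (if pv p i = false then 1 else 0) := by
  unfold cf
  rw [take_pv h, List.count_append]
  cases hx : pv p i <;> simp [hx]

theorem ct_succ {p : List Bool} {i : ℕ} (h : i < p.length) :
    ct p (i+1) = ct p i + (if pv p i = true then 1 else 0) := by
  unfold ct
  rw [take_pv h, List.count_append]
  cases hx : pv p i <;> simp [hx]

theorem dyck_head {p : List Bool} (hd : IsDyck p) (hl : 2 ≤ p.length) :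
    ∃ s, p = true :: s := by
  obtain ⟨⟨h2, hple, hbal⟩, hstrict⟩ := fret_spec hd hl
  have h1 := hstrict 1 (le_refl _) (by omega)
  cases p with
  | nil => simp at hl
  | cons x s =>
    cases x
    · exfalso
      unfold cf ct at h1
      simp at h1
    · exact ⟨s, rfl⟩

theorem dyck_decomp {p : List Bool} (hd : IsDyck p) (hl : 2 ≤ p.length) :
    ∃ q r, IsDyck q ∧ IsDyck r ∧ p = comp q r ∧ q.length = fret p - 2 := by
  obtain ⟨⟨h2, hple, hbal⟩, hstrict⟩ := fret_spec hd hl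
  obtain ⟨s, rfl⟩ := dyck_head hd hl
  set T := fret (true :: s) with hT
  clear_value T
  have hslen : (true :: s).length = s.length + 1 := by simp
  have hTs : T - 2 < s.length := by omega
  -- the step into the first return is a down-step
  have hTlt : T - 1 < (true :: s).length := by omega
  have hcfT : cf (true :: s) T = cf (true :: s) (T-1) +
      (if pv (true :: s) (T-1) = false then 1 else 0) := by
    rw [show T = (T-1)+1 by omega]
    exact cf_succ hTlt
  have hctT : ct (true :: s) T = ct (true :: s) (T-1) +
      (if pv (true :: s) (T-1) = true then 1 else 0) := by
    rw [show T = (T-1)+1 by omega]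
    exact ct_succ hTlt
  have hstT := hstrict (T-1) (by omega) (by omega)
  have hpvf : pv (true :: s) (T-1) = false := by
    cases hx : pv (true :: s) (T-1)
    · rfl
    · rw [hx] at hcfT hctT
      simp at hcfT hctT
      omega
  rw [hpvf] at hcfT hctT
  simp at hcfT hctT
  -- counts of prefixes within q
  have hcnt : ∀ i, i ≤ T - 2 →
      cf (true :: s) (1 + i) = ((s.take i)).count false ∧
      ct (true :: s) (1 + i) = 1 + ((s.take i)).count true := by
    intro i hi
    unfold cf ct
    rw [show 1 + i = i + 1 by omega, List.take_succ_cons, List.count_cons, List.count_cons]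
    simp
    omega
  have hcntT : cf (true :: s) (T-1) = (s.take (T-2)).count false ∧
      ct (true :: s) (T-1) = 1 + (s.take (T-2)).count true := by
    have := hcnt (T-2) (le_refl _)
    rw [show 1 + (T - 2) = T - 1 by omega] at this
    exact this
  have hbalq : (s.take (T-2)).count false = (s.take (T-2)).count true := by
    omega
  have hr : s.drop (T-1) = (true :: s).drop T := by
    rw [show T = 1 + (T-1) by omega, ← List.drop_drop]
    simp
  refine ⟨s.take (T-2), s.drop (T-1), ?_, ?_, ?_, ?_⟩
  · -- IsDyck q
    constructor
    · intro i
      show (((s.take (T-2)).take i)).count false ≤ (((s.take (T-2)).take i)).count true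
      rcases Nat.lt_or_ge i (T-1) with hi | hi
      · rw [List.take_take]
        rcases Nat.eq_zero_or_pos i with h0 | h0
        · subst h0; simp
        have hmin : min i (T-2) = i := by omega
        rw [hmin]
        have hcnti := hcnt i (by omega)
        have hsti := hstrict (1 + i) (by omega) (by omega)
        omega
      · rw [List.take_of_length_le (by rw [List.length_take]; exact le_trans (Nat.min_le_left _ _) (by omega))]
        omega
    · exact hbalq
  · -- IsDyck r
    have hsplit : ∀ i, (true :: s).take (T + i) = (true :: s).take T ++ (s.drop (T-1)).take i := by
      intro i
      rw [List.take_add, hr]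
    constructor
    · intro i
      have hdl : cf (true :: s) (T + i) ≤ ct (true :: s) (T + i) := hd.1 (T + i)
      have hcf : cf (true :: s) (T + i) = cf (true :: s) T + ((s.drop (T-1)).take i).count false := by
        unfold cf
        rw [hsplit i, List.count_append]
      have hct : ct (true :: s) (T + i) = ct (true :: s) T + ((s.drop (T-1)).take i).count true := by
        unfold ct
        rw [hsplit i, List.count_append]
      omega
    · have htot := hd.2
      have hsplitfull : (true :: s) = (true :: s).take T ++ s.drop (T-1) := by
        rw [hr]
        exact (List.take_append_drop T (true :: s)).symm
      have hcf : (true :: s).count false = cf (true :: s) T + (s.drop (T-1)).count false := by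
        conv_lhs => rw [hsplitfull]
        rw [List.count_append]
        rfl
      have hct : (true :: s).count true = ct (true :: s) T + (s.drop (T-1)).count true := by
        conv_lhs => rw [hsplitfull]
        rw [List.count_append]
        rfl
      omega
  · -- p = comp q r
    rw [comp_eq]
    congr 1
    have h1 : s = s.take (T-2) ++ s.drop (T-2) := (List.take_append_drop _ s).symm
    have h2' : s.drop (T-2) = pv s (T-2) :: s.drop ((T-2)+1) := drop_pv hTs
    rw [show (T-2)+1 = T-1 by omega] at h2'
    have h3 : pv s (T-2) = false := by
      rw [← hpvf, show T - 1 = (T-2)+1 by omega]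
      exact (List.getD_cons_succ).symm
    rw [h3] at h2'
    rw [h2'] at h1
    exact h1
  · rw [List.length_take]
    exact Nat.min_eq_left (by omega)

end Fret
section DyckCount

/-- Number of Dyck paths with statistic `k`. -/
noncomputable def Rc (n ℓ k : ℕ) : ℕ :=
  Nat.card {p : List Bool | p.length = 2 * n ∧ IsDyck p ∧ downStepsAtLeast ℓ p = k}

open scoped Classical in
theorem Rc_eq (n ℓ k : ℕ) :
    Rc n ℓ k = (Finset.univ.filter
      (fun v : List.Vector Bool (2*n) =>
        IsDyck v.toList ∧ downStepsAtLeast ℓ v.toList = k)).card := by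
  rw [Rc]
  have e : {p : List Bool | p.length = 2 * n ∧ IsDyck p ∧ downStepsAtLeast ℓ p = k} ≃
      {v : List.Vector Bool (2*n) //
        IsDyck v.toList ∧ downStepsAtLeast ℓ v.toList = k} :=
    { toFun := fun x => ⟨⟨x.1, x.2.1⟩, x.2.2⟩
      invFun := fun v => ⟨v.1.toList, List.Vector.toList_length v.1, v.2⟩
      left_inv := fun x => rfl
      right_inv := fun v => rfl }
  rw [Nat.card_congr e, Nat.card_eq_fintype_card]
  convert Fintype.card_subtype _

theorem stat_nil (ℓ : ℕ) : downStepsAtLeast ℓ [] = 0 := by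
  rw [downSteps_eq]
  simp [cnt]

open scoped Classical in
theorem Rc_base (ℓ k : ℕ) : Rc 0 ℓ k = if k = 0 then 1 else 0 := by
  rw [Rc_eq]
  have hv : ∀ v : List.Vector Bool (2*0), v.toList = [] := by
    intro v
    have h0 : v.toList.length = 0 := by rw [List.Vector.toList_length]
    exact List.length_eq_zero_iff.mp h0
  by_cases hk : k = 0
  · subst hk
    rw [Finset.filter_true_of_mem (fun v _ => by rw [hv v]; exact ⟨dyck_nil, stat_nil ℓ⟩)]
    rw [Finset.card_univ, card_vector]
    norm_num
  · rw [Finset.filter_false_of_mem (fun v _ => by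
      rw [hv v]
      rintro ⟨-, hcon⟩
      rw [stat_nil ℓ] at hcon
      exact hk hcon.symm)]
    simp [hk]

theorem dyck_count_false {n : ℕ} {p : List Bool} (hd : IsDyck p) (hl : p.length = 2 * n) :
    p.count false = n := by
  have := isDyck_count hd
  omega

open scoped Classical in
theorem Rc_thresh_zero (n k : ℕ) :
    Rc n 0 k = if k = n then ∑ k' ∈ Finset.range (n+1), Rc n 1 k' else 0 := by
  rw [Rc_eq]
  by_cases hk : k = n
  · rw [if_pos hk]
    rw [Finset.filter_congr (q := fun v : List.Vector Bool (2*n) => IsDyck v.toList)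
      (fun v _ => by
        constructor
        · rintro ⟨h1, -⟩; exact h1
        · intro h1
          refine ⟨h1, ?_⟩
          rw [stat_zero h1, dyck_count_false h1 (List.Vector.toList_length v), hk])]
    rw [Finset.card_eq_sum_card_fiberwise
      (f := fun v => downStepsAtLeast 1 v.toList) (t := Finset.range (n+1))
      (fun v hv => Finset.mem_range.mpr (by
        simp only [Finset.mem_coe, Finset.mem_filter, Finset.mem_univ, true_and] at hv
        show downStepsAtLeast 1 v.toList < n + 1
        have := downSteps_le 1 v.toList
        have := dyck_count_false hv (List.Vector.toList_length v)
        omega))]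
    apply Finset.sum_congr rfl
    intro k' _
    rw [Rc_eq, Finset.filter_filter]
  · rw [if_neg hk]
    rw [Finset.filter_false_of_mem (fun v _ => by
      rintro ⟨h1, hcon⟩
      rw [stat_zero h1, dyck_count_false h1 (List.Vector.toList_length v)] at hcon
      exact hk hcon.symm)]
    simp

open scoped Classical in
theorem Rc_rec (n ℓ k : ℕ) :
    Rc (n+1) (ℓ+1) k = ∑ a ∈ Finset.range (n+1), ∑ k1 ∈ Finset.range (k+1),
      Rc a ℓ k1 * Rc (n-a) (ℓ+1) (k-k1) := by
  rw [Rc_eq]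
  rw [Finset.card_eq_sum_card_fiberwise
    (f := fun v : List.Vector Bool (2*(n+1)) => (fret v.toList - 2)/2)
    (t := Finset.range (n+1))
    (fun v hv => Finset.mem_range.mpr (by
      simp only [Finset.mem_coe, Finset.mem_filter, Finset.mem_univ, true_and] at hv
      show (fret v.toList - 2)/2 < n + 1
      have hlen := List.Vector.toList_length v
      have := (fret_spec hv.1 (by omega)).1
      omega))]
  apply Finset.sum_congr rfl
  intro a ha
  rw [Finset.mem_range] at ha
  rw [Finset.filter_filter]
  -- bijection with pairs
  have hbij : (Finset.univ.filter
      (fun x : List.Vector Bool (2*a) × List.Vector Bool (2*(n-a)) =>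
        (IsDyck x.1.toList ∧ IsDyck x.2.toList) ∧
          downStepsAtLeast ℓ x.1.toList + downStepsAtLeast (ℓ+1) x.2.toList = k)).card
      = (Finset.univ.filter (fun v : List.Vector Bool (2*(n+1)) =>
          (IsDyck v.toList ∧ downStepsAtLeast (ℓ+1) v.toList = k) ∧
            (fret v.toList - 2)/2 = a)).card := by
    apply Finset.card_bij (fun x _ => (⟨comp x.1.toList x.2.toList, by
      rw [comp_length, List.Vector.toList_length, List.Vector.toList_length]
      omega⟩ : List.Vector Bool (2*(n+1))))
    · intro x hx
      obtain ⟨-, ⟨hq, hr⟩, hsum⟩ := Finset.mem_filter.mp hx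
      refine Finset.mem_filter.mpr ⟨Finset.mem_univ (α := List.Vector Bool (2*(n+1))) _, ?_⟩
      refine ⟨⟨?_, ?_⟩, ?_⟩
      · show IsDyck (comp x.1.toList x.2.toList)
        exact dyck_comp hq hr
      · show downStepsAtLeast (ℓ+1) (comp x.1.toList x.2.toList) = k
        rw [stat_comp hq]
        exact hsum
      · show (fret (comp x.1.toList x.2.toList) - 2)/2 = a
        rw [fret_comp hq, List.Vector.toList_length]
        omega
    · intro x hx y hy hxy
      have hlists : comp x.1.toList x.2.toList = comp y.1.toList y.2.toList := by
        have := congrArg List.Vector.toList hxy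
        exact this
      unfold comp at hlists
      have hlen : (true :: x.1.toList).length = (true :: y.1.toList).length := by
        simp [List.Vector.toList_length]
      obtain ⟨h1, h2⟩ := List.append_inj hlists hlen
      have hq : x.1 = y.1 := List.Vector.eq _ _ (by
        have := congrArg List.tail h1
        simpa using this)
      have hr : x.2 = y.2 := List.Vector.eq _ _ (by
        have := congrArg List.tail h2
        simpa using this)
      exact Prod.ext hq hr
    · intro v hv
      obtain ⟨-, ⟨hd, hstat⟩, hfr⟩ := Finset.mem_filter.mp hv
      have hlen := List.Vector.toList_length v
      obtain ⟨q, r, hq, hr, hcomp, hqlen⟩ := dyck_decomp hd (by omega)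
      have hfret : fret (List.Vector.toList v) = q.length + 2 := by
        rw [hcomp]; exact fret_comp hq
      have hqeven := isDyck_count hq
      have hqlen2a : q.length = 2*a := by omega
      have hrlen : r.length = 2*(n-a) := by
        have := congrArg List.length hcomp
        rw [comp_length] at this
        omega
      refine ⟨(⟨q, hqlen2a⟩, ⟨r, hrlen⟩), ?_, ?_⟩
      · simp only [Finset.mem_filter, Finset.mem_univ, true_and]
        refine ⟨⟨hq, hr⟩, ?_⟩
        show downStepsAtLeast ℓ q + downStepsAtLeast (ℓ+1) r = k
        rw [← stat_comp hq, ← hcomp]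
        exact hstat
      · apply List.Vector.eq
        show comp q r = List.Vector.toList v
        exact hcomp.symm
  rw [← hbij]
  rw [Finset.card_eq_sum_card_fiberwise
    (f := fun x => downStepsAtLeast ℓ x.1.toList) (t := Finset.range (k+1))
    (fun x hx => Finset.mem_range.mpr (by
      simp only [Finset.mem_coe, Finset.mem_filter, Finset.mem_univ, true_and] at hx
      obtain ⟨-, h2⟩ := hx
      show downStepsAtLeast ℓ x.1.toList < k + 1
      omega))]
  apply Finset.sum_congr rfl
  intro k1 hk1
  rw [Finset.mem_range] at hk1
  rw [Finset.filter_filter]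
  rw [Finset.filter_congr (q := fun x : List.Vector Bool (2*a) × List.Vector Bool (2*(n-a)) =>
      (IsDyck x.1.toList ∧ downStepsAtLeast ℓ x.1.toList = k1) ∧
      (IsDyck x.2.toList ∧ downStepsAtLeast (ℓ+1) x.2.toList = k - k1))
    (fun x _ => by constructor
                   · rintro ⟨⟨⟨h1, h2⟩, h3⟩, h4⟩
                     exact ⟨⟨h1, h4⟩, ⟨h2, by omega⟩⟩
                   · rintro ⟨⟨h1, h4⟩, h2, h5⟩
                     exact ⟨⟨⟨h1, h2⟩, by omega⟩, h4⟩)]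
  have hcp := card_filter_prod
    (fun q : List.Vector Bool (2*a) => IsDyck q.toList ∧ downStepsAtLeast ℓ q.toList = k1)
    (fun r : List.Vector Bool (2*(n-a)) =>
      IsDyck r.toList ∧ downStepsAtLeast (ℓ+1) r.toList = k - k1)
  rw [Rc_eq, Rc_eq]
  convert hcp using 2 <;> congr!

end DyckCount
theorem main : ∀ n ℓ k : ℕ, 1 ≤ ℓ → Pc n ℓ k = Rc n ℓ k := by
  intro n
  induction n using Nat.strong_induction_on with
  | _ n IH =>
    intro ℓ k hℓ
    match n with
    | 0 => rw [Pc_base, Rc_base]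
    | Nat.succ n =>
      match ℓ, hℓ with
      | Nat.succ m, _ =>
        rw [Pc_rec, Rc_rec]
        apply Finset.sum_congr rfl
        intro a ha
        rw [Finset.mem_range] at ha
        apply Finset.sum_congr rfl
        intro k1 _
        have h2 : Pc (n-a) (m+1) (k-k1) = Rc (n-a) (m+1) (k-k1) :=
          IH (n-a) (by omega) (m+1) (k-k1) (by omega)
        have h1 : Pc a m k1 = Rc a m k1 := by
          match m with
          | 0 =>
            rw [Pc_thresh_zero, Rc_thresh_zero]
            by_cases hk1 : k1 = a
            · rw [if_pos hk1, if_pos hk1]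
              apply Finset.sum_congr rfl
              intro k' _
              exact IH a (by omega) 1 k' (by omega)
            · rw [if_neg hk1, if_neg hk1]
          | Nat.succ m' =>
            exact IH a (by omega) (m'+1) k1 (by omega)
        rw [h1, h2]

end MMPaux

/-- The number of 132-avoiding permutations of `{1,…,n}` with `mmp(ℓ,0,0,0)(σ) = k`
equals the number of Dyck paths with `2n` steps having exactly `k` down-steps ending
at height at least `ℓ`. -/
theorem card_mmpQuadI_eq_card_dyck (n ℓ k : ℕ) (hn : 1 ≤ n) (hℓ : 1 ≤ ℓ) :
    Nat.card {σ : Equiv.Perm (Fin n) | Avoids132 n σ ∧ mmp n ℓ 0 0 0 σ = k} =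
    Nat.card {p : List Bool | p.length = 2 * n ∧ IsDyck p ∧ downStepsAtLeast ℓ p = k} :=
  MMPaux.main n ℓ k hℓ
end

section
/- If σ = σ_1…σ_n is a 132-avoiding permutation of {1,…,n} with n ≥ 1, then mmp(0,1,0,0)(σ) = σ_1 − 1; that is, the number of indices i such that some j < i has σ_j > σ_i equals the first value of σ minus one. -/
/-- For a 132-avoiding permutation `σ` of `{1,…,n}`, `mmp(0,1,0,0)(σ) = σ₁ - 1`: the
number of indices `i` such that some `j < i` has `σ j > σ i` equals the first value of
`σ` minus one (which, in the 0-based encoding by `Fin n`, is `(σ ⟨0, hn⟩ : ℕ)`). -/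
theorem mmp0100_eq_first_value_sub_one (n : ℕ) (hn : 1 ≤ n) (σ : Equiv.Perm (Fin n))
    (hσ : Avoids132 n σ) :
    mmp n 0 1 0 0 σ = (σ ⟨0, hn⟩ : ℕ) := by
  set z : Fin n := ⟨0, hn⟩ with hz
  have hzle : ∀ i : Fin n, z ≤ i := fun i => Fin.mk_le_of_le_val (Nat.zero_le _)
  have hset : {i : Fin n |
      0 ≤ Nat.card {j : Fin n | i < j ∧ σ i < σ j} ∧
      1 ≤ Nat.card {j : Fin n | j < i ∧ σ i < σ j} ∧
      0 ≤ Nat.card {j : Fin n | j < i ∧ σ j < σ i} ∧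
      0 ≤ Nat.card {j : Fin n | i < j ∧ σ j < σ i}} = {i : Fin n | σ i < σ z} := by
    ext i
    simp only [Set.mem_setOf_eq, Nat.zero_le, true_and, and_true]
    constructor
    · intro h
      have hpos : 0 < Nat.card {j : Fin n | j < i ∧ σ i < σ j} := h
      rw [Nat.card_pos_iff] at hpos
      obtain ⟨⟨j, hji, hij⟩, -⟩ := hpos
      by_contra hcon
      push_neg at hcon
      have hiz : i ≠ z := by
        intro he; subst he
        exact absurd hji (not_lt_of_ge (hzle j))
      have hzi : z < i := lt_of_le_of_ne (hzle i) (Ne.symm hiz)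
      have hσzi : σ z < σ i := lt_of_le_of_ne hcon (fun he => hiz (σ.injective he.symm))
      have hjz : j ≠ z := by
        intro he; subst he
        exact absurd hij (not_lt_of_ge (le_of_lt hσzi))
      have hzj : z < j := lt_of_le_of_ne (hzle j) (Ne.symm hjz)
      exact hσ z j i hzj hji ⟨hσzi, hij⟩
    · intro h
      have hne : i ≠ z := fun he => by subst he; exact lt_irrefl _ h
      have hzi : z < i := lt_of_le_of_ne (hzle i) (Ne.symm hne)
      have : Nonempty {j : Fin n | j < i ∧ σ i < σ j} := ⟨⟨z, hzi, h⟩⟩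
      exact Nat.one_le_iff_ne_zero.mpr (Nat.card_ne_zero.mpr ⟨this, Set.toFinite _⟩)
  have himg : σ '' {i : Fin n | σ i < σ z} = {v : Fin n | v < σ z} := by
    ext v
    constructor
    · rintro ⟨i, hi, rfl⟩; exact hi
    · intro hv; exact ⟨σ.symm v, by simpa using hv, by simp⟩
  have hcard : Nat.card {i : Fin n | σ i < σ z} = Nat.card {v : Fin n | v < σ z} := by
    rw [Nat.card_coe_set_eq, Nat.card_coe_set_eq, ← himg,
      Set.ncard_image_of_injective _ σ.injective]
  have hval : Nat.card {v : Fin n | v < σ z} = (σ z : ℕ) := by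
    rw [Nat.card_coe_set_eq]
    have : {v : Fin n | v < σ z} = ↑(Finset.Iio (σ z)) := by ext v; simp
    rw [this, Set.ncard_coe_finset, Fin.card_Iio]
  rw [mmp, hset, hcard, hval]
end

section
/- Let σ = σ_1…σ_n be a 132-avoiding permutation of {1,…,n} and let 1 ≤ ℓ < i ≤ n. Then there are at least ℓ indices j < i with σ_j > σ_i (i.e. index i matches MMP(0,ℓ,0,0) in σ) if and only if σ_i < σ_j for every j with 1 ≤ j ≤ ℓ. -/
/-- For a 132-avoiding permutation `σ` and `1 ≤ ℓ < i ≤ n` (in 1-based terms; here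
`i : Fin n` is 0-based, so the hypothesis is `ℓ ≤ i`), index `i` matches
`MMP(0,ℓ,0,0)`, i.e. there are at least `ℓ` indices `j < i` with `σ j > σ i`,
if and only if `σ i < σ j` for every one of the first `ℓ` positions `j`. -/
theorem mmp_0l00_match_iff (n ℓ : ℕ) (σ : Equiv.Perm (Fin n)) (hσ : Avoids132 n σ)
    (hℓ : 1 ≤ ℓ) (i : Fin n) (hi : ℓ ≤ (i : ℕ)) :
    ℓ ≤ Nat.card {j : Fin n | j < i ∧ σ i < σ j} ↔
      ∀ j : Fin n, (j : ℕ) < ℓ → σ i < σ j := by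
  constructor
  · intro hcard j hj
    by_contra hnot
    have hji : j < i := by
      have : (j : ℕ) < i := lt_of_lt_of_le hj hi
      exact this
    have hσji : σ j < σ i := by
      rcases lt_trichotomy (σ j) (σ i) with h | h | h
      · exact h
      · exact absurd (σ.injective h) (Fin.ne_of_lt hji)
      · exact absurd h hnot
    -- every element of the set is < j
    have hsub : {k : Fin n | k < i ∧ σ i < σ k} ⊆ {k : Fin n | k < j} := by
      intro k hk
      rcases hk with ⟨hki, hσk⟩
      rcases lt_trichotomy k j with h | h | h
      · exact h
      · subst h; exact absurd hσk (asymm hσji)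
      · exact absurd ⟨hσji, hσk⟩ (hσ j k i h hki)
    have h1 : Nat.card {k : Fin n | k < i ∧ σ i < σ k} ≤
        Nat.card {k : Fin n | k < j} :=
      Nat.card_mono (Set.toFinite _) hsub
    have h2 : {k : Fin n | k < j} = ↑(Finset.Iio j) := by
      ext k; simp
    have h3 : Nat.card {k : Fin n | k < j} = (j : ℕ) := by
      rw [h2, Nat.card_coe_set_eq, Set.ncard_coe_finset, Fin.card_Iio]
    omega
  · intro h
    have hlt : ∀ m : ℕ, m < ℓ → m < n := fun m hm =>
      lt_of_lt_of_le hm (le_trans hi (le_of_lt i.isLt))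
    have hinj : Function.Injective
        (fun m : Fin ℓ => (⟨⟨(m : ℕ), hlt m m.isLt⟩, by
          refine ⟨?_, h _ m.isLt⟩
          exact (show ((m : ℕ)) < (i : ℕ) from lt_of_lt_of_le m.isLt hi)⟩ :
          {j : Fin n | j < i ∧ σ i < σ j})) := by
      intro a b hab
      have : (a : ℕ) = (b : ℕ) := congrArg (fun x => ((x : {j : Fin n | j < i ∧ σ i < σ j}) : Fin n).val) hab
      exact Fin.ext this
    calc ℓ = Nat.card (Fin ℓ) := (Nat.card_eq_fintype_card.trans (Fintype.card_fin ℓ)).symm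
    _ ≤ Nat.card {j : Fin n | j < i ∧ σ i < σ j} := Nat.card_le_card_of_injective _ hinj
end

section
/- For all integers 1 ≤ ℓ ≤ n and k ≥ 0, the number of 132-avoiding permutations σ of {1,…,n} with mmp(0,ℓ,0,0)(σ) = k equals the number of 132-avoiding permutations σ of {1,…,n} such that the first entry of pack(σ_ℓ σ_{ℓ+1} … σ_n), the packed suffix of length n + 1 − ℓ, equals k + 1. -/
/-- `packVal w i` is the `i`-th entry of `pack w`, the packing of the sequence `w` of
distinct integers: each entry is replaced by its rank, `1 +` the number of strictly
smaller entries (so the `i`-th smallest entry is replaced by `i`). -/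
noncomputable def packVal {m : ℕ} (w : Fin m → ℕ) (i : Fin m) : ℕ :=
  1 + Nat.card {j : Fin m | w j < w i}

lemma down132 {n : ℕ} {σ : Equiv.Perm (Fin n)} (h : Avoids132 n σ) {i j j' : Fin n}
    (hjj' : j < j') (h1 : j' < i) (h2 : σ i < σ j') : j < i ∧ σ i < σ j := by
  refine ⟨hjj'.trans h1, ?_⟩
  by_contra hc
  push_neg at hc
  have hne : σ j ≠ σ i := fun e => absurd (σ.injective e) (ne_of_lt (hjj'.trans h1))
  exact h j j' i hjj' h1 ⟨lt_of_le_of_ne hc hne, h2⟩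

lemma key132 {n ℓ : ℕ} (hℓ : 1 ≤ ℓ) (hn : ℓ ≤ n) {σ : Equiv.Perm (Fin n)}
    (h : Avoids132 n σ) (i : Fin n) :
    ℓ ≤ Nat.card {j : Fin n | j < i ∧ σ i < σ j} ↔
      (ℓ - 1 < (i : ℕ) ∧ σ i < σ ⟨ℓ - 1, by omega⟩) := by
  constructor
  · intro hcard
    have hic : Nat.card {j : Fin n | j < i ∧ σ i < σ j} ≤ (i : ℕ) := by
      have hinj : Function.Injective
          (fun j : {j : Fin n | j < i ∧ σ i < σ j} => (⟨((j : Fin n) : ℕ), j.2.1⟩ : Fin i)) := by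
        intro a b hab
        simp only [Fin.mk.injEq] at hab
        exact Subtype.ext (Fin.ext hab)
      simpa using Nat.card_le_card_of_injective _ hinj
    have hil : ℓ - 1 < (i : ℕ) := by omega
    refine ⟨hil, ?_⟩
    by_contra hc
    have hsub : ∀ j : {j : Fin n | j < i ∧ σ i < σ j}, ((j : Fin n) : ℕ) < ℓ - 1 := by
      intro j
      by_contra hj
      push_neg at hj
      apply hc
      rcases eq_or_lt_of_le hj with he | hlt
      · have he' : (⟨ℓ - 1, by omega⟩ : Fin n) = (j : Fin n) := Fin.ext he
        rw [he']
        exact j.2.2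
      · have hlt' : (⟨ℓ - 1, by omega⟩ : Fin n) < (j : Fin n) := by
          rw [Fin.lt_def]; exact hlt
        exact (down132 h hlt' j.2.1 j.2.2).2
    have hinj : Function.Injective
        (fun j : {j : Fin n | j < i ∧ σ i < σ j} =>
          (⟨((j : Fin n) : ℕ), hsub j⟩ : Fin (ℓ - 1))) := by
      intro a b hab
      simp only [Fin.mk.injEq] at hab
      exact Subtype.ext (Fin.ext hab)
    have hle := Nat.card_le_card_of_injective _ hinj
    have hfin : Nat.card (Fin (ℓ - 1)) = ℓ - 1 := by simp
    omega
  · rintro ⟨h1, h2⟩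
    have hg : ∀ m : Fin ℓ, (⟨(m : ℕ), lt_of_lt_of_le m.2 hn⟩ : Fin n) < i ∧
        σ i < σ ⟨(m : ℕ), lt_of_lt_of_le m.2 hn⟩ := by
      intro m
      rcases eq_or_lt_of_le (Nat.le_sub_one_of_lt m.2) with he | hlt
      · have he' : (⟨(m : ℕ), lt_of_lt_of_le m.2 hn⟩ : Fin n) = ⟨ℓ - 1, by omega⟩ :=
          Fin.ext he
        rw [he']
        constructor
        · rw [Fin.lt_def]; exact h1
        · exact h2
      · have hlt' : (⟨(m : ℕ), lt_of_lt_of_le m.2 hn⟩ : Fin n) < (⟨ℓ - 1, by omega⟩ : Fin n) := by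
          rw [Fin.lt_def]; exact hlt
        have h1' : (⟨ℓ - 1, by omega⟩ : Fin n) < i := by
          rw [Fin.lt_def]; exact h1
        exact down132 h hlt' h1' h2
    have hinj : Function.Injective
        (fun m : Fin ℓ => (⟨⟨(m : ℕ), lt_of_lt_of_le m.2 hn⟩, hg m⟩ :
          {j : Fin n | j < i ∧ σ i < σ j})) := by
      intro a b hab
      simp only [Subtype.mk.injEq, Fin.mk.injEq] at hab
      exact Fin.ext hab
    have hle := Nat.card_le_card_of_injective _ hinj
    have hfin : Nat.card (Fin ℓ) = ℓ := by simp
    exact le_trans (le_of_eq hfin.symm) hle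

lemma shiftCard {n ℓ : ℕ} (hℓ : 1 ≤ ℓ) (hn : ℓ ≤ n) (σ : Equiv.Perm (Fin n)) :
    Nat.card {i : Fin n | ℓ - 1 < (i : ℕ) ∧ σ i < σ ⟨ℓ - 1, by omega⟩} =
    Nat.card {j : Fin (n + 1 - ℓ) |
      σ ⟨ℓ - 1 + (j : ℕ), by have := j.isLt; exact Nat.lt_of_lt_of_le (by omega) le_rfl⟩ < σ ⟨ℓ - 1, by omega⟩} := by
  refine Nat.card_eq_of_bijective
    (fun p => ⟨⟨((p : Fin n) : ℕ) - (ℓ - 1), by have := (p : Fin n).isLt; have := p.2.1; omega⟩,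
      ?_⟩) ⟨?_, ?_⟩
  · have he : (⟨ℓ - 1 + (((p : Fin n) : ℕ) - (ℓ - 1)), by have := (p : Fin n).isLt; omega⟩ :
        Fin n) = (p : Fin n) := Fin.ext (by have := p.2.1; simp; omega)
    simp only [Set.mem_setOf_eq]
    rw [he]
    exact p.2.2
  · intro a b hab
    simp only [Subtype.mk.injEq, Fin.mk.injEq] at hab
    have ha := a.2.1
    have hb := b.2.1
    exact Subtype.ext (Fin.ext (by omega))
  · rintro ⟨j, hj⟩
    have hj0 : 0 < (j : ℕ) := by
      by_contra h0
      push_neg at h0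
      have he : (⟨ℓ - 1 + (j : ℕ), by have := j.isLt; exact Nat.lt_of_lt_of_le (by omega) le_rfl⟩ : Fin n) = ⟨ℓ - 1, by omega⟩ :=
        Fin.ext (by simp; omega)
      rw [Set.mem_setOf_eq, he] at hj
      exact lt_irrefl _ hj
    have hmem : (⟨ℓ - 1 + (j : ℕ), by have := j.isLt; exact Nat.lt_of_lt_of_le (by omega) le_rfl⟩ : Fin n) ∈
        {i : Fin n | ℓ - 1 < (i : ℕ) ∧ σ i < σ ⟨ℓ - 1, by omega⟩} := by
      exact ⟨by simp; omega, hj⟩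
    refine ⟨⟨_, hmem⟩, ?_⟩
    apply Subtype.ext
    apply Fin.ext
    simp

lemma main132 {n ℓ : ℕ} (hℓ : 1 ≤ ℓ) (hn : ℓ ≤ n) {σ : Equiv.Perm (Fin n)}
    (hav : Avoids132 n σ) :
    packVal (fun j : Fin (n + 1 - ℓ) =>
        ((σ ⟨ℓ - 1 + (j : ℕ), by have := j.isLt; exact Nat.lt_of_lt_of_le (by omega) le_rfl⟩ : Fin n) : ℕ))
      ⟨0, Nat.sub_pos_of_lt (Nat.lt_succ_of_le hn)⟩ = mmp n 0 ℓ 0 0 σ + 1 := by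
  have h1 : mmp n 0 ℓ 0 0 σ =
      Nat.card {i : Fin n | ℓ - 1 < (i : ℕ) ∧ σ i < σ ⟨ℓ - 1, by omega⟩} := by
    unfold mmp
    have hset : {i : Fin n |
        0 ≤ Nat.card {j : Fin n | i < j ∧ σ i < σ j} ∧
        ℓ ≤ Nat.card {j : Fin n | j < i ∧ σ i < σ j} ∧
        0 ≤ Nat.card {j : Fin n | j < i ∧ σ j < σ i} ∧
        0 ≤ Nat.card {j : Fin n | i < j ∧ σ j < σ i}} =
        {i : Fin n | ℓ - 1 < (i : ℕ) ∧ σ i < σ ⟨ℓ - 1, by omega⟩} := by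
      ext i
      simp only [Set.mem_setOf_eq, Nat.zero_le, true_and, and_true]
      exact key132 hℓ hn hav i
    rw [hset]
  have h2 : Nat.card {j : Fin (n + 1 - ℓ) |
      ((σ ⟨ℓ - 1 + (j : ℕ), by have := j.isLt; exact Nat.lt_of_lt_of_le (by omega) le_rfl⟩ : Fin n) : ℕ) <
      ((σ ⟨ℓ - 1 + ((⟨0, Nat.sub_pos_of_lt (Nat.lt_succ_of_le hn)⟩ : Fin (n + 1 - ℓ)) : ℕ), by omega⟩ : Fin n) : ℕ)} =
      Nat.card {j : Fin (n + 1 - ℓ) |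
      σ ⟨ℓ - 1 + (j : ℕ), by have := j.isLt; exact Nat.lt_of_lt_of_le (by omega) le_rfl⟩ < σ ⟨ℓ - 1, by omega⟩} := by
    have h0 : (⟨ℓ - 1 + ((⟨0, Nat.sub_pos_of_lt (Nat.lt_succ_of_le hn)⟩ : Fin (n + 1 - ℓ)) : ℕ), by omega⟩ : Fin n) =
        ⟨ℓ - 1, by omega⟩ := Fin.ext (by simp)
    have hset : {j : Fin (n + 1 - ℓ) |
        ((σ ⟨ℓ - 1 + (j : ℕ), by have := j.isLt; exact Nat.lt_of_lt_of_le (by omega) le_rfl⟩ : Fin n) : ℕ) <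
        ((σ ⟨ℓ - 1 + ((⟨0, Nat.sub_pos_of_lt (Nat.lt_succ_of_le hn)⟩ : Fin (n + 1 - ℓ)) : ℕ), by omega⟩ : Fin n) : ℕ)} =
        {j : Fin (n + 1 - ℓ) |
        σ ⟨ℓ - 1 + (j : ℕ), by have := j.isLt; exact Nat.lt_of_lt_of_le (by omega) le_rfl⟩ < σ ⟨ℓ - 1, by omega⟩} := by
      rfl
    rw [hset]
  rw [h1, shiftCard hℓ hn σ]
  unfold packVal
  rw [h2]
  omega

/-- For `1 ≤ ℓ ≤ n`, the number of 132-avoiding permutations `σ` of `{1,…,n}` with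
`mmp(0,ℓ,0,0)(σ) = k` equals the number of 132-avoiding permutations `σ` of `{1,…,n}`
whose packed suffix of length `n + 1 - ℓ` (the packing of `σ_ℓ σ_{ℓ+1} … σ_n`, written
here 0-based) begins with the value `k + 1`. -/
theorem card_mmp0l00_eq_card_packed_suffix (n ℓ k : ℕ) (hℓ : 1 ≤ ℓ) (hn : ℓ ≤ n) :
    Nat.card {σ : Equiv.Perm (Fin n) | Avoids132 n σ ∧ mmp n 0 ℓ 0 0 σ = k} =
    Nat.card {σ : Equiv.Perm (Fin n) | Avoids132 n σ ∧
      packVal (fun j : Fin (n + 1 - ℓ) =>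
          ((σ ⟨ℓ - 1 + (j : ℕ), by have := j.isLt; omega⟩ : Fin n) : ℕ))
        ⟨0, by omega⟩ = k + 1} := by
  have hset : {σ : Equiv.Perm (Fin n) | Avoids132 n σ ∧ mmp n 0 ℓ 0 0 σ = k} =
      {σ : Equiv.Perm (Fin n) | Avoids132 n σ ∧
        packVal (fun j : Fin (n + 1 - ℓ) =>
            ((σ ⟨ℓ - 1 + (j : ℕ), by have := j.isLt; omega⟩ : Fin n) : ℕ))
          ⟨0, by omega⟩ = k + 1} := by
    ext σ
    simp only [Set.mem_setOf_eq]
    constructor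
    · rintro ⟨hav, hk⟩
      exact ⟨hav, by rw [main132 hℓ hn hav]; omega⟩
    · rintro ⟨hav, hk⟩
      refine ⟨hav, ?_⟩
      rw [main132 hℓ hn hav] at hk
      omega
  rw [hset]
end

section
/- For every n ≥ 1, the map φ sending a 132-avoiding permutation σ of {1,…,n} to the sequence φ(σ) = (mmp(0,n,0,0)(σ)+1, mmp(0,n−1,0,0)(σ)+1, …, mmp(0,1,0,0)(σ)+1) is a bijection from the set of 132-avoiding permutations of {1,…,n} onto the set of non-decreasing parking functions of length n. -/
/-- A non-decreasing parking function of length `n`, written as `f : Fin n → ℕ` (0-based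
positions, values in `{1,…,n}`): `f` is weakly increasing and `1 ≤ f i ≤ i + 1` for all
`i` (in 1-based terms, `f(i) ≤ i`, which also forces the values to lie in `{1,…,n}`). -/
def NDParking (n : ℕ) (f : Fin n → ℕ) : Prop :=
  Monotone f ∧ ∀ i : Fin n, 1 ≤ f i ∧ f i ≤ (i : ℕ) + 1

namespace Phi132

variable {n : ℕ}

/-- number of indices `j < i` with `σ j > σ i`. -/
noncomputable def lcount (σ : Equiv.Perm (Fin n)) (i : Fin n) : ℕ :=
  Nat.card {j : Fin n | j < i ∧ σ i < σ j}

/-- minimum of the first `t` values of `σ`, as a natural number. -/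
noncomputable def pmin (σ : Equiv.Perm (Fin n)) (t : ℕ) : ℕ :=
  sInf ((fun j => (σ j : ℕ)) '' {j : Fin n | (j : ℕ) < t})

lemma mmp_eq_card (σ : Equiv.Perm (Fin n)) (t : ℕ) :
    mmp n 0 t 0 0 σ = {i : Fin n | t ≤ lcount σ i}.ncard := by
  rw [mmp, Nat.card_coe_set_eq]
  congr 1
  ext i
  simp [lcount]

lemma ncard_val_lt (m : ℕ) (h : m ≤ n) : ({j : Fin n | (j : ℕ) < m}).ncard = m := by
  have he : {j : Fin n | (j : ℕ) < m} = Set.range (Fin.castLE h) := by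
    ext j
    constructor
    · intro hj
      exact ⟨⟨(j : ℕ), hj⟩, by ext; simp⟩
    · rintro ⟨k, rfl⟩
      exact k.isLt
  rw [he, ← Nat.card_coe_set_eq,
    Nat.card_range_of_injective (Fin.castLE_injective h), Nat.card_eq_fintype_card,
    Fintype.card_fin]

lemma ncard_val_ge (m : ℕ) : ({j : Fin n | m ≤ (j : ℕ)}).ncard = n - m := by
  rcases le_or_gt m n with h | h
  · have he : {j : Fin n | m ≤ (j : ℕ)} = Set.univ \ {j : Fin n | (j : ℕ) < m} := by
      ext j; simp [Nat.not_lt]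
    rw [he, Set.ncard_diff (Set.subset_univ {j : Fin n | (j : ℕ) < m}) (Set.toFinite _),
      ncard_val_lt m h, Set.ncard_univ, Nat.card_eq_fintype_card, Fintype.card_fin]
  · have he : {j : Fin n | m ≤ (j : ℕ)} = (∅ : Set (Fin n)) := by
      ext j
      simp only [Set.mem_setOf_eq, Set.mem_empty_iff_false, iff_false, not_le]
      omega
    rw [he]
    simp
    omega

lemma pmin_nonempty (σ : Equiv.Perm (Fin n)) {t : ℕ} (h1 : 1 ≤ t) (hn : 1 ≤ n) :
    ((fun j => (σ j : ℕ)) '' {j : Fin n | (j : ℕ) < t}).Nonempty := by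
  refine ⟨(σ ⟨0, hn⟩ : ℕ), ⟨⟨0, hn⟩, ?_, rfl⟩⟩
  exact h1

lemma pmin_mem (σ : Equiv.Perm (Fin n)) {t : ℕ} (h1 : 1 ≤ t) (hn : 1 ≤ n) :
    ∃ j : Fin n, (j : ℕ) < t ∧ (σ j : ℕ) = pmin σ t := by
  have := Nat.sInf_mem (pmin_nonempty σ h1 hn)
  obtain ⟨j, hj, hj2⟩ := this
  exact ⟨j, hj, hj2⟩

lemma pmin_le_val (σ : Equiv.Perm (Fin n)) {t : ℕ} {j : Fin n} (hj : (j : ℕ) < t) :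
    pmin σ t ≤ (σ j : ℕ) :=
  Nat.sInf_le ⟨j, hj, rfl⟩

lemma pmin_lt (σ : Equiv.Perm (Fin n)) {t : ℕ} (h1 : 1 ≤ t) (hn : 1 ≤ n) :
    pmin σ t < n := by
  obtain ⟨j, _, hj2⟩ := pmin_mem σ h1 hn
  rw [← hj2]; exact (σ j).isLt

lemma pmin_anti (σ : Equiv.Perm (Fin n)) {s t : ℕ} (h1 : 1 ≤ s) (hst : s ≤ t) (hn : 1 ≤ n) :
    pmin σ t ≤ pmin σ s := by
  obtain ⟨j, hj, hj2⟩ := pmin_mem σ h1 hn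
  rw [← hj2]
  exact pmin_le_val σ (lt_of_lt_of_le hj hst)

/-- pigeonhole: the min of the first `t` values is at most `n - t`. -/
lemma pmin_le (σ : Equiv.Perm (Fin n)) {t : ℕ} (h1 : 1 ≤ t) (h2 : t ≤ n) :
    pmin σ t ≤ n - t := by
  by_contra hc
  push_neg at hc
  have hsub : (⇑σ '' {j : Fin n | (j : ℕ) < t}) ⊆ {v : Fin n | n - t + 1 ≤ (v : ℕ)} := by
    rintro v ⟨j, hj, rfl⟩
    have := pmin_le_val σ hj
    simp only [Set.mem_setOf_eq]
    omega
  have hcard := Set.ncard_le_ncard hsub (Set.toFinite _)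
  rw [Set.ncard_image_of_injective _ σ.injective, ncard_val_lt t h2, ncard_val_ge] at hcard
  omega

lemma lcount_iff (σ : Equiv.Perm (Fin n)) (hσ : Avoids132 n σ) {t : ℕ} (h2 : t ≤ n) (i : Fin n) :
    t ≤ lcount σ i ↔ ∀ j : Fin n, (j : ℕ) < t → σ i < σ j := by
  have hlc : lcount σ i = {j : Fin n | j < i ∧ σ i < σ j}.ncard := Nat.card_coe_set_eq _
  constructor
  · intro h j hj
    by_contra hc
    push_neg at hc
    have hsub : {k : Fin n | k < i ∧ σ i < σ k} ⊆ {k : Fin n | (k : ℕ) < (j : ℕ)} := by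
      intro k hk
      simp only [Set.mem_setOf_eq] at hk ⊢
      by_contra hge
      push_neg at hge
      rcases eq_or_lt_of_le hge with heq | hlt
      · have : j = k := Fin.ext heq
        subst this
        exact absurd hk.2 (not_lt_of_ge hc)
      · have hjk : j < k := by rw [Fin.lt_def]; exact hlt
        have h3 := hσ j k i hjk hk.1
        rcases lt_trichotomy (σ j) (σ i) with hx | hx | hx
        · exact h3 ⟨hx, hk.2⟩
        · have hji : j = i := σ.injective hx
          have hlt2 : j < i := lt_trans hjk hk.1
          rw [hji] at hlt2
          exact absurd hlt2 (lt_irrefl _)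
        · exact absurd hx (not_lt_of_ge hc)
    have hcard := Set.ncard_le_ncard hsub (Set.toFinite _)
    rw [ncard_val_lt _ (le_of_lt j.isLt)] at hcard
    rw [hlc] at h
    omega
  · intro h
    have hit : t ≤ (i : ℕ) := by
      by_contra hc
      push_neg at hc
      exact absurd (h i hc) (lt_irrefl _)
    have hsub : {j : Fin n | (j : ℕ) < t} ⊆ {j : Fin n | j < i ∧ σ i < σ j} := by
      intro j hj
      simp only [Set.mem_setOf_eq] at hj ⊢
      exact ⟨by rw [Fin.lt_def]; omega, h j hj⟩
    have hcard := Set.ncard_le_ncard hsub (Set.toFinite _)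
    rw [ncard_val_lt _ h2] at hcard
    omega

lemma mmp_eq_pmin (σ : Equiv.Perm (Fin n)) (hσ : Avoids132 n σ) {t : ℕ}
    (h1 : 1 ≤ t) (h2 : t ≤ n) : mmp n 0 t 0 0 σ = pmin σ t := by
  have hn : 1 ≤ n := le_trans h1 h2
  rw [mmp_eq_card]
  have hset : {i : Fin n | t ≤ lcount σ i} = σ ⁻¹' {v : Fin n | (v : ℕ) < pmin σ t} := by
    ext i
    simp only [Set.mem_setOf_eq, Set.mem_preimage]
    rw [lcount_iff σ hσ h2]
    constructor
    · intro h
      obtain ⟨j₀, hj₀, hj₀2⟩ := pmin_mem σ h1 hn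
      have := h j₀ hj₀
      rw [Fin.lt_def] at this
      omega
    · intro h j hj
      have h2 := pmin_le_val σ hj
      rw [Fin.lt_def]
      omega
  rw [hset, show ⇑σ ⁻¹' _ = σ.symm '' _ from (σ.symm.image_eq_preimage_symm _).symm, Set.ncard_image_of_injective _ σ.symm.injective,
    ncard_val_lt _ (le_of_lt (pmin_lt σ h1 hn))]

lemma phi_mapsTo (σ : Equiv.Perm (Fin n)) (hσ : Avoids132 n σ) (hn : 1 ≤ n) :
    NDParking n (fun i : Fin n => mmp n 0 (n - (i : ℕ)) 0 0 σ + 1) := by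
  have key : ∀ i : Fin n, mmp n 0 (n - (i : ℕ)) 0 0 σ = pmin σ (n - (i : ℕ)) := by
    intro i
    exact mmp_eq_pmin σ hσ (by have := i.isLt; omega) (Nat.sub_le n _)
  constructor
  · intro i i' hii'
    simp only
    rw [key i, key i']
    have hii : (i : ℕ) ≤ (i' : ℕ) := hii'
    have := pmin_anti σ (s := n - (i' : ℕ)) (t := n - (i : ℕ))
      (by have := i'.isLt; omega) (by omega) hn
    omega
  · intro i
    simp only
    refine ⟨by omega, ?_⟩
    rw [key i]
    have h1 := pmin_le σ (t := n - (i : ℕ)) (by have := i.isLt; omega) (Nat.sub_le n _)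
    have := i.isLt
    omega

lemma half (σ τ : Equiv.Perm (Fin n)) (hσ : Avoids132 n σ) {p : Fin n}
    (hpre : ∀ j : Fin n, j < p → σ j = τ j)
    (hm : pmin σ ((p : ℕ) + 1) = pmin τ ((p : ℕ) + 1))
    (hA : pmin σ ((p : ℕ) + 1) < (σ p : ℕ))
    (hB : pmin τ ((p : ℕ) + 1) < (τ p : ℕ)) :
    σ p ≤ τ p := by
  have hn : 1 ≤ n := p.pos
  obtain ⟨j₀, hj₀, hj₀2⟩ := pmin_mem σ (t := (p : ℕ) + 1) (by omega) hn
  have hj₀p : j₀ < p := by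
    rw [Fin.lt_def]
    have hne : (j₀ : ℕ) ≠ (p : ℕ) := by
      intro h
      have he : j₀ = p := Fin.ext h
      rw [he] at hj₀2
      omega
    omega
  obtain ⟨k, hk⟩ : ∃ k, σ k = τ p := ⟨σ.symm (τ p), σ.apply_symm_apply (τ p)⟩
  rcases lt_trichotomy k p with hkp | hkp | hkp
  · have h1 := hpre k hkp
    rw [h1] at hk
    have : k = p := τ.injective hk
    subst this
    exact absurd hkp (lt_irrefl _)
  · subst hkp
    exact le_of_eq hk
  · have h3 := hσ j₀ p k hj₀p hkp
    have h4 : σ j₀ < σ k := by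
      rw [Fin.lt_def, hj₀2, hk, hm]
      exact hB
    have h5 : ¬ σ k < σ p := fun hlt => h3 ⟨h4, hlt⟩
    rw [← hk]
    exact le_of_not_gt h5

lemma eq_of_pmin_eq (σ τ : Equiv.Perm (Fin n)) (hσ : Avoids132 n σ) (hτ : Avoids132 n τ)
    (h : ∀ t, 1 ≤ t → t ≤ n → pmin σ t = pmin τ t) : σ = τ := by
  have main : ∀ m : ℕ, ∀ p : Fin n, (p : ℕ) = m → σ p = τ p := by
    intro m
    induction m using Nat.strong_induction_on with
    | _ m ih =>
      intro p hp
      have hn : 1 ≤ n := p.pos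
      have hpre : ∀ j : Fin n, j < p → σ j = τ j := by
        intro j hj
        exact ih (j : ℕ) (by rw [← hp]; exact hj) j rfl
      have hm : pmin σ ((p : ℕ) + 1) = pmin τ ((p : ℕ) + 1) :=
        h _ (by omega) (by have := p.isLt; omega)
      have hle1 : pmin σ ((p : ℕ) + 1) ≤ (σ p : ℕ) := pmin_le_val σ (by omega)
      have hle2 : pmin τ ((p : ℕ) + 1) ≤ (τ p : ℕ) := pmin_le_val τ (by omega)
      by_cases hA : pmin σ ((p : ℕ) + 1) = (σ p : ℕ)
      · by_cases hB : pmin τ ((p : ℕ) + 1) = (τ p : ℕ)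
        · exact Fin.ext (by rw [← hA, ← hB, hm])
        · exfalso
          obtain ⟨j₀, hj₀, hj₀2⟩ := pmin_mem τ (t := (p : ℕ) + 1) (by omega) hn
          have hj₀p : j₀ < p := by
            rw [Fin.lt_def]
            have hne : (j₀ : ℕ) ≠ (p : ℕ) := by
              intro hx
              exact hB (by rw [← hj₀2, Fin.ext hx])
            omega
          have h1 := hpre j₀ hj₀p
          have hx : σ j₀ = σ p := Fin.ext (by rw [h1, hj₀2, ← hm, hA])
          have hje : j₀ = p := σ.injective hx
          rw [hje] at hj₀p
          exact absurd hj₀p (lt_irrefl _)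
      · by_cases hB : pmin τ ((p : ℕ) + 1) = (τ p : ℕ)
        · exfalso
          obtain ⟨j₀, hj₀, hj₀2⟩ := pmin_mem σ (t := (p : ℕ) + 1) (by omega) hn
          have hj₀p : j₀ < p := by
            rw [Fin.lt_def]
            have hne : (j₀ : ℕ) ≠ (p : ℕ) := by
              intro hx
              exact hA (by rw [← hj₀2, Fin.ext hx])
            omega
          have h1 := hpre j₀ hj₀p
          have hx : τ j₀ = τ p := Fin.ext (by rw [← h1, hj₀2, hm, hB])
          have hje : j₀ = p := τ.injective hx
          rw [hje] at hj₀p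
          exact absurd hj₀p (lt_irrefl _)
        · have hpre' : ∀ j : Fin n, j < p → τ j = σ j := fun j hj => (hpre j hj).symm
          exact le_antisymm
            (half σ τ hσ hpre hm (lt_of_le_of_ne hle1 hA) (lt_of_le_of_ne hle2 hB))
            (half τ σ hτ hpre' hm.symm (lt_of_le_of_ne hle2 hB) (lt_of_le_of_ne hle1 hA))
  exact Equiv.ext fun p => main (p : ℕ) p rfl

/-- `Mf f t = f(n-t) - 1` : the intended minimum of the first `t` values. -/
def Mf (f : Fin n → ℕ) (t : ℕ) : ℕ :=
  if h : 1 ≤ t ∧ t ≤ n then f ⟨n - t, by omega⟩ - 1 else 0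

lemma Mf_le {f : Fin n → ℕ} (hf : NDParking n f) {t : ℕ} (h1 : 1 ≤ t) (h2 : t ≤ n) :
    Mf f t ≤ n - t := by
  rw [Mf, dif_pos ⟨h1, h2⟩]
  have h3 : f (⟨n - t, by omega⟩ : Fin n) ≤ (n - t) + 1 := (hf.2 _).2
  omega

lemma Mf_anti {f : Fin n → ℕ} (hf : NDParking n f) {s t : ℕ} (h1 : 1 ≤ s) (hst : s ≤ t)
    (h2 : t ≤ n) : Mf f t ≤ Mf f s := by
  rw [Mf, Mf, dif_pos ⟨le_trans h1 hst, h2⟩, dif_pos ⟨h1, le_trans hst h2⟩]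
  have hmono : f ⟨n - t, by omega⟩ ≤ f ⟨n - s, by omega⟩ := hf.1 (Fin.mk_le_mk.mpr (by omega))
  omega

noncomputable def gseq (f : Fin n → ℕ) : ℕ → ℕ
  | 0 => Mf f 1
  | (p + 1) =>
    if Mf f (p + 2) < Mf f (p + 1) then Mf f (p + 2)
    else sInf {v | Mf f (p + 1) < v ∧ ∀ q < p + 1, gseq f q ≠ v}

lemma gseq_invariant {f : Fin n → ℕ} (hf : NDParking n f) :
    ∀ p, p < n →
      (∀ q, q < p → gseq f q ≠ gseq f p) ∧ gseq f p < n ∧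
      Mf f (p + 1) ≤ gseq f p ∧ ∃ q ≤ p, gseq f q = Mf f (p + 1) := by
  intro p
  induction p using Nat.strong_induction_on with
  | _ p ih =>
    intro hp
    cases p with
    | zero =>
      have hg : gseq f 0 = Mf f 1 := by rw [gseq]
      have h1 : Mf f 1 ≤ n - 1 := Mf_le hf (le_refl 1) hp
      exact ⟨fun q hq => absurd hq (Nat.not_lt_zero q), by omega, le_of_eq hg.symm,
        ⟨0, le_refl 0, hg⟩⟩
    | succ p =>
      rw [show p + 1 + 1 = p + 2 from rfl]
      have IH := ih p (Nat.lt_succ_self p) (by omega)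
      have hanti : Mf f (p + 2) ≤ Mf f (p + 1) := Mf_anti hf (by omega) (by omega) (by omega)
      by_cases hlt : Mf f (p + 2) < Mf f (p + 1)
      · have hg : gseq f (p + 1) = Mf f (p + 2) := by rw [gseq, if_pos hlt]
        refine ⟨?_, ?_, le_of_eq hg.symm, ⟨p + 1, le_refl _, hg⟩⟩
        · intro q hq
          have h1 := (ih q (by omega) (by omega)).2.2.1
          have h2 := Mf_anti hf (show 1 ≤ q + 1 by omega) (show q + 1 ≤ p + 1 by omega)
            (show p + 1 ≤ n by omega)
          omega
        · have := Mf_le hf (show 1 ≤ p + 2 by omega) (show p + 2 ≤ n by omega)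
          omega
      · have heq2 : Mf f (p + 2) = Mf f (p + 1) := le_antisymm hanti (not_lt.mp hlt)
        have hg : gseq f (p + 1)
            = sInf {v | Mf f (p + 1) < v ∧ ∀ q < p + 1, gseq f q ≠ v} := by
          rw [gseq, if_neg hlt]
        have hm : Mf f (p + 1) ≤ n - (p + 2) := by
          have := Mf_le hf (show 1 ≤ p + 2 by omega) (show p + 2 ≤ n by omega)
          omega
        obtain ⟨q₀, hq₀, hq₀2⟩ := IH.2.2.2
        have hmU : Mf f (p + 1) ∈ (Finset.range (p + 1)).image (gseq f) :=
          Finset.mem_image.mpr ⟨q₀, Finset.mem_range.mpr (by omega), hq₀2⟩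
        have hcardE : ((Finset.range (p + 1)).image (gseq f)).card ≤ p + 1 :=
          le_trans (Finset.card_image_le) (by simp)
        have hcardE2 : (((Finset.range (p + 1)).image (gseq f)).erase (Mf f (p + 1))).card ≤ p := by
          rw [Finset.card_erase_of_mem hmU]
          omega
        have hIoo : (Finset.Ioo (Mf f (p + 1)) n).card = n - Mf f (p + 1) - 1 :=
          Nat.card_Ioo _ _
        have hsd := Finset.le_card_sdiff
          (((Finset.range (p + 1)).image (gseq f)).erase (Mf f (p + 1)))
          (Finset.Ioo (Mf f (p + 1)) n)
        have hpos : 0 < ((Finset.Ioo (Mf f (p + 1)) n) \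
            (((Finset.range (p + 1)).image (gseq f)).erase (Mf f (p + 1)))).card := by
          omega
        obtain ⟨v, hv⟩ := Finset.card_pos.mp hpos
        rw [Finset.mem_sdiff, Finset.mem_Ioo] at hv
        have hvn : v < n := hv.1.2
        have hvm : Mf f (p + 1) < v := hv.1.1
        have hvU : v ∉ (Finset.range (p + 1)).image (gseq f) := by
          intro hc
          exact hv.2 (Finset.mem_erase.mpr ⟨by omega, hc⟩)
        have hvS : v ∈ {v | Mf f (p + 1) < v ∧ ∀ q < p + 1, gseq f q ≠ v} := by
          refine ⟨hvm, fun q hq hgq => ?_⟩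
          exact hvU (Finset.mem_image.mpr ⟨q, Finset.mem_range.mpr hq, hgq⟩)
        have hSne : {v | Mf f (p + 1) < v ∧ ∀ q < p + 1, gseq f q ≠ v}.Nonempty := ⟨v, hvS⟩
        have hmem := Nat.sInf_mem hSne
        have hlev := Nat.sInf_le hvS
        rw [← hg] at hmem hlev
        have hmem1 : Mf f (p + 1) < gseq f (p + 1) := hmem.1
        have hmem2 : ∀ q, q < p + 1 → gseq f q ≠ gseq f (p + 1) := fun q hq => hmem.2 q hq
        exact ⟨fun q hq => hmem2 q hq, by omega, by omega,
          ⟨q₀, by omega, by rw [hq₀2, heq2]⟩⟩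

lemma surj_aux {f : Fin n → ℕ} (hf : NDParking n f) (hn : 1 ≤ n) :
    ∃ σ : Equiv.Perm (Fin n), Avoids132 n σ ∧
      (fun i : Fin n => mmp n 0 (n - (i : ℕ)) 0 0 σ + 1) = f := by
  have inv := gseq_invariant hf
  have hFinj : Function.Injective
      (fun p : Fin n => (⟨gseq f (p : ℕ), (inv (p : ℕ) p.isLt).2.1⟩ : Fin n)) := by
    intro a b hab
    have hv : gseq f (a : ℕ) = gseq f (b : ℕ) := congrArg Fin.val hab
    rcases lt_trichotomy (a : ℕ) (b : ℕ) with h | h | h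
    · exact absurd hv ((inv (b : ℕ) b.isLt).1 (a : ℕ) h)
    · exact Fin.ext h
    · exact absurd hv.symm ((inv (a : ℕ) a.isLt).1 (b : ℕ) h)
  obtain ⟨σ, hσv⟩ : ∃ σ : Equiv.Perm (Fin n), ∀ p : Fin n, (σ p : ℕ) = gseq f (p : ℕ) :=
    ⟨Equiv.ofBijective _ (Finite.injective_iff_bijective.mp hFinj), fun p => rfl⟩
  have havoid : Avoids132 n σ := by
    intro i j k hij hjk hc
    have h1 : (σ i : ℕ) < (σ k : ℕ) := Fin.lt_def.mp hc.1
    have h2 : (σ k : ℕ) < (σ j : ℕ) := Fin.lt_def.mp hc.2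
    rw [hσv i, hσv k] at h1
    rw [hσv k, hσv j] at h2
    have hij' : (i : ℕ) < (j : ℕ) := Fin.lt_def.mp hij
    have hjk' : (j : ℕ) < (k : ℕ) := Fin.lt_def.mp hjk
    have hjn : (j : ℕ) < n := j.isLt
    obtain ⟨pj, hpj⟩ : ∃ pj, (j : ℕ) = pj + 1 := ⟨(j : ℕ) - 1, by omega⟩
    have hMi : Mf f ((i : ℕ) + 1) ≤ gseq f (i : ℕ) := (inv (i : ℕ) i.isLt).2.2.1
    have hManti : Mf f (pj + 1) ≤ Mf f ((i : ℕ) + 1) :=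
      Mf_anti hf (by omega) (by omega) (by omega)
    rw [hpj] at h2
    by_cases hbr : Mf f (pj + 2) < Mf f (pj + 1)
    · have hgj : gseq f (pj + 1) = Mf f (pj + 2) := by rw [gseq, if_pos hbr]
      omega
    · have hgj : gseq f (pj + 1)
          = sInf {v | Mf f (pj + 1) < v ∧ ∀ q < pj + 1, gseq f q ≠ v} := by
        rw [gseq, if_neg hbr]
      have hkS : gseq f (k : ℕ) ∈ {v | Mf f (pj + 1) < v ∧ ∀ q < pj + 1, gseq f q ≠ v} := by
        refine ⟨by omega, fun q hq => ?_⟩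
        exact (inv (k : ℕ) k.isLt).1 q (by omega)
      have hle := Nat.sInf_le hkS
      rw [← hgj] at hle
      omega
  have hpmin : ∀ t, 1 ≤ t → t ≤ n → pmin σ t = Mf f t := by
    intro t h1 h2
    apply le_antisymm
    · obtain ⟨q, hq, hq2⟩ := (inv (t - 1) (by omega)).2.2.2
      rw [show t - 1 + 1 = t from by omega] at hq2
      refine Nat.sInf_le ⟨⟨q, by omega⟩, ?_, ?_⟩
      · show q < t
        omega
      · show (σ ⟨q, by omega⟩ : ℕ) = Mf f t
        rw [hσv ⟨q, by omega⟩]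
        exact hq2
    · apply le_csInf (pmin_nonempty σ h1 hn)
      rintro b ⟨j, hj, rfl⟩
      show Mf f t ≤ (σ j : ℕ)
      rw [hσv j]
      have ha := (inv (j : ℕ) j.isLt).2.2.1
      have hb : Mf f t ≤ Mf f ((j : ℕ) + 1) := Mf_anti hf (by omega)
        (by exact hj) (by exact h2)
      omega
  refine ⟨σ, havoid, funext fun i => ?_⟩
  have hi : (i : ℕ) < n := i.isLt
  have hkey := mmp_eq_pmin σ havoid (t := n - (i : ℕ)) (by omega) (Nat.sub_le n _)
  have hMi : Mf f (n - (i : ℕ)) = f i - 1 := by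
    rw [Mf, dif_pos ⟨by omega, by omega⟩]
    have : f (⟨n - (n - (i : ℕ)), by omega⟩ : Fin n) = f i :=
      congrArg f (Fin.ext (by show n - (n - (i : ℕ)) = (i : ℕ); omega))
    omega
  have hf1 := (hf.2 i).1
  show mmp n 0 (n - (i : ℕ)) 0 0 σ + 1 = f i
  rw [hkey, hpmin _ (by omega) (Nat.sub_le n _), hMi]
  omega

end Phi132

/-- The map `φ` sending a 132-avoiding permutation `σ` of `{1,…,n}` to the sequence
`(mmp(0,n,0,0)(σ)+1, mmp(0,n-1,0,0)(σ)+1, …, mmp(0,1,0,0)(σ)+1)` (whose entry at 0-based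
position `i` is `mmp(0, n - i, 0, 0)(σ) + 1`) is a bijection from the set of 132-avoiding
permutations of `{1,…,n}` onto the set of non-decreasing parking functions of length `n`. -/
theorem bijOn_phi_avoid132_ndParking (n : ℕ) (hn : 1 ≤ n) :
    Set.BijOn
      (fun σ : Equiv.Perm (Fin n) => fun i : Fin n => mmp n 0 (n - (i : ℕ)) 0 0 σ + 1)
      {σ : Equiv.Perm (Fin n) | Avoids132 n σ}
      {f : Fin n → ℕ | NDParking n f} := by
  refine ⟨?_, ?_, ?_⟩
  · intro σ hσ
    exact Phi132.phi_mapsTo σ hσ hn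
  · intro σ hσ τ hτ hfe
    apply Phi132.eq_of_pmin_eq σ τ hσ hτ
    intro t h1 h2
    have hfe' := congrFun hfe (⟨n - t, by omega⟩ : Fin n)
    simp only at hfe'
    rw [show n - ((⟨n - t, by omega⟩ : Fin n) : ℕ) = t from by
      show n - (n - t) = t; omega] at hfe'
    rw [Phi132.mmp_eq_pmin σ hσ h1 h2, Phi132.mmp_eq_pmin τ hτ h1 h2] at hfe'
    omega
  · intro f hf
    obtain ⟨σ, havoid, hphi⟩ := Phi132.surj_aux hf hn
    exact ⟨σ, havoid, hphi⟩
end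

section
/- For all integers n ≥ 1 and 0 ≤ k ≤ n−1, the number of 132-avoiding permutations σ of {1,…,n} containing exactly k values having at least one greater value on their left (i.e. with mmp(0,1,0,0)(σ) = k) equals the Catalan triangle number C(n,k) = ((n−k)/n)·binomial(n+k−1, k). -/
open Finset Equiv


namespace CatTri

def c : ℕ → ℕ → ℕ
  | 0, k => if k = 0 then 1 else 0
  | n+1, k => if k ≤ n then ∑ j ∈ Finset.range (k+1), c n j else 0

lemma c_zero (n : ℕ) : c n 0 = 1 := by
  induction n with
  | zero => simp [c]
  | succ n ih => simp [c, ih]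

lemma c_eq_zero (n k : ℕ) (h : n ≤ k) (h1 : 1 ≤ n) : c n k = 0 := by
  obtain ⟨m, rfl⟩ : ∃ m, n = m + 1 := ⟨n - 1, by omega⟩
  rw [c]
  simp only [if_neg (by omega : ¬ k ≤ m)]

lemma c_rec (n k : ℕ) (h : k ≤ n) : c (n+1) k = ∑ j ∈ Finset.range (k+1), c n j := by
  simp [c, h]

lemma c_pascal (n k : ℕ) (h : k + 1 ≤ n) :
    c (n+1) (k+1) = c (n+1) k + c n (k+1) := by
  rw [c_rec n (k+1) h, c_rec n k (by omega), Finset.sum_range_succ]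

lemma c_closed (n : ℕ) (hn : 1 ≤ n) : ∀ k, n * c n k = (n - k) * (n + k - 1).choose k := by
  induction n with
  | zero => omega
  | succ n ih =>
    rcases Nat.lt_or_ge 0 n with h2 | h2
    swap
    · -- n = 0, proving for c 1 k
      intro k
      have hn0 : n = 0 := by omega
      subst hn0
      rcases eq_or_ne k 0 with rfl | hk
      · simp [c_zero]
      · rw [c_eq_zero 1 k (by omega) le_rfl]
        have h10 : 1 - k = 0 := by omega
        rw [h10]
        simp
    · have IH := ih h2
      intro k
      induction k with
      | zero => simp [c_zero]
      | succ k ihk =>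
        by_cases hkn : k + 1 ≤ n
        · obtain ⟨m, rfl⟩ : ∃ m, n = k + 1 + m := ⟨n - (k+1), by omega⟩
          have hpas := c_pascal (k+1+m) k (by omega)
          have IH' := IH (k+1)
          rw [show k+1+m+1-k = m+2 by omega, show k+1+m+1+k-1 = 2*k+m+1 by omega] at ihk
          rw [show k+1+m-(k+1) = m by omega, show k+1+m+(k+1)-1 = 2*k+m+1 by omega] at IH'
          rw [show k+1+m+1-(k+1) = m+1 by omega, show k+1+m+1+(k+1)-1 = 2*k+m+2 by omega]
          have e3 := Nat.choose_succ_right_eq (2*k+m+1) k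
          rw [show 2*k+m+1-k = k+m+1 by omega] at e3
          have e4 : (2*k+m+2).choose (k+1) = (2*k+m+1).choose k + (2*k+m+1).choose (k+1) := by
            rw [show 2*k+m+2 = (2*k+m+1)+1 by omega]
            exact Nat.choose_succ_succ _ _
          apply Nat.eq_of_mul_eq_mul_left (show 0 < k+1+m by omega)
          zify at hpas ihk IH' e3 e4 ⊢
          linear_combination ((k:ℤ)+1+m)*((k:ℤ)+m+2)*hpas + ((k:ℤ)+1+m)*ihk + ((k:ℤ)+m+2)*IH' - e3 - ((k:ℤ)+1+m)*((m:ℤ)+1)*e4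
        · rw [c_eq_zero (n+1) (k+1) (by omega) (by omega)]
          have : n + 1 - (k+1) = 0 := by omega
          rw [this]
          simp

end CatTri

lemma mmp_eq_first (n : ℕ) [NeZero n] (σ : Equiv.Perm (Fin n)) (hσ : Avoids132 n σ) :
    mmp n 0 1 0 0 σ = ((σ 0 : Fin n) : ℕ) := by
  classical
  have hset : {i : Fin n |
      0 ≤ Nat.card {j : Fin n | i < j ∧ σ i < σ j} ∧
      1 ≤ Nat.card {j : Fin n | j < i ∧ σ i < σ j} ∧
      0 ≤ Nat.card {j : Fin n | j < i ∧ σ j < σ i} ∧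
      0 ≤ Nat.card {j : Fin n | i < j ∧ σ j < σ i}} = {i : Fin n | σ i < σ 0} := by
    ext i
    simp only [Set.mem_setOf_eq, Nat.zero_le, true_and, and_true]
    rw [Nat.one_le_iff_ne_zero, ne_eq, Nat.card_eq_zero]
    simp only [not_or, not_isEmpty_iff, not_infinite_iff_finite]
    constructor
    · rintro ⟨⟨⟨j, hj, hij⟩⟩, -⟩
      by_contra hle
      push_neg at hle
      have h0i : σ 0 < σ i := by
        rcases lt_or_eq_of_le hle with h | h
        · exact h
        · exfalso
          have : (0 : Fin n) = i := σ.injective h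
          subst this
          exact absurd hj (by simp)
      have hj0 : (0 : Fin n) < j := by
        rw [Fin.pos_iff_ne_zero']
        rintro rfl
        exact absurd hij (not_lt.mpr h0i.le)
      exact hσ 0 j i hj0 hj ⟨h0i, hij⟩
    · intro h
      have hi0 : (0 : Fin n) < i := by
        rcases eq_or_ne i 0 with rfl | hne
        · exact absurd h (lt_irrefl _)
        · exact (Fin.pos_iff_ne_zero' i).mpr hne
      exact ⟨⟨⟨0, hi0, h⟩⟩, Set.toFinite _⟩
  rw [mmp, hset]
  -- card of {i | σ i < z}
  rw [Nat.card_eq_fintype_card, Fintype.card_subtype]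
  rw [show (univ.filter (fun i => i ∈ {i : Fin n | σ i < σ 0})) = (Finset.Iio (σ 0)).map ⟨σ.symm, σ.symm.injective⟩ from ?_]
  · rw [card_map, Fin.card_Iio]
  · ext i
    simp only [mem_filter, mem_univ, true_and, Set.mem_setOf_eq, mem_map, mem_Iio,
      Function.Embedding.coeFn_mk]
    constructor
    · intro h; exact ⟨σ i, h, by simp⟩
    · rintro ⟨v, hv, rfl⟩; simpa using hv

lemma succAbove_val {n : ℕ} (p : Fin (n+1)) (v : Fin n) :
    ((p.succAbove v : Fin (n+1)) : ℕ) = if (v:ℕ) < (p:ℕ) then (v:ℕ) else (v:ℕ)+1 := by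
  rcases lt_or_ge ((v:ℕ)) ((p:ℕ)) with h | h
  · rw [Fin.succAbove_of_castSucc_lt p v (by rwa [Fin.lt_def])]
    simp [h]
  · rw [Fin.succAbove_of_le_castSucc p v (by rwa [Fin.le_def])]
    simp [Nat.not_lt.mpr h]

noncomputable def ext1 {n : ℕ} (p : Fin (n+1)) (τ : Perm (Fin n)) : Perm (Fin (n+1)) :=
  Equiv.ofBijective (fun i => Fin.cases p (fun j => p.succAbove (τ j)) i)
    (Finite.injective_iff_bijective.mp (by
      intro x y hxy
      induction x using Fin.cases with
      | zero =>
        induction y using Fin.cases with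
        | zero => rfl
        | succ j => simp only [Fin.cases_zero, Fin.cases_succ] at hxy
                    exact absurd hxy.symm (Fin.succAbove_ne p (τ j))
      | succ i =>
        induction y using Fin.cases with
        | zero => simp only [Fin.cases_zero, Fin.cases_succ] at hxy
                  exact absurd hxy (Fin.succAbove_ne p (τ i))
        | succ j =>
          simp only [Fin.cases_succ] at hxy
          have := τ.injective (Fin.succAbove_right_injective hxy)
          rw [this]))

@[simp] lemma ext1_zero {n : ℕ} (p : Fin (n+1)) (τ : Perm (Fin n)) : ext1 p τ 0 = p := rfl

@[simp] lemma ext1_succ {n : ℕ} (p : Fin (n+1)) (τ : Perm (Fin n)) (j : Fin n) :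
    ext1 p τ j.succ = p.succAbove (τ j) := by
  show (Fin.cases p (fun j => p.succAbove (τ j)) j.succ : Fin (n+1)) = _
  rw [Fin.cases_succ]

lemma avoids_ext1_iff {n : ℕ} [NeZero n] {k : ℕ} (hk : k < n+1) (τ : Perm (Fin n)) :
    Avoids132 (n+1) (ext1 ⟨k, hk⟩ τ) ↔ Avoids132 n τ ∧ ((τ 0 : Fin n):ℕ) ≤ k := by
  set p : Fin (n+1) := ⟨k, hk⟩ with hp
  constructor
  · intro hf
    constructor
    · intro i j l hij hjl ⟨h1, h2⟩
      refine hf i.succ j.succ l.succ ?_ ?_ ⟨?_, ?_⟩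
      · exact Fin.succ_lt_succ_iff.mpr hij
      · exact Fin.succ_lt_succ_iff.mpr hjl
      · simpa using (Fin.succAbove_lt_succAbove_iff (p := p)).mpr h1
      · simpa using (Fin.succAbove_lt_succAbove_iff (p := p)).mpr h2
    · by_contra hc
      push_neg at hc
      have hkn : k < n := lt_of_le_of_lt (Nat.le_of_lt_succ (Nat.lt_succ_of_lt hc)) (τ 0).isLt
      set kn : Fin n := ⟨k, hkn⟩ with hkn'
      set b : Fin n := τ.symm kn with hb
      have hτb : τ b = kn := by simp [hb]
      have hb0 : b ≠ 0 := by
        intro h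
        rw [h] at hτb
        rw [hτb] at hc
        simp [hkn'] at hc
      refine hf 0 ((0:Fin n).succ) (b.succ) ?_ ?_ ⟨?_, ?_⟩
      · exact Fin.succ_pos _
      · exact Fin.succ_lt_succ_iff.mpr ((Fin.pos_iff_ne_zero' b).mpr hb0)
      · show ext1 p τ 0 < ext1 p τ b.succ
        rw [ext1_zero, ext1_succ, Fin.lt_def, succAbove_val, hτb]
        simp only [hp, hkn']
        split <;> omega
      · show ext1 p τ b.succ < ext1 p τ (0:Fin n).succ
        rw [ext1_succ, ext1_succ, Fin.lt_def, succAbove_val, succAbove_val, hτb]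
        simp only [hp, hkn']
        split <;> split <;> omega
  · rintro ⟨hτ, h0⟩
    intro i j l hij hjl ⟨h1, h2⟩
    obtain ⟨a, rfl⟩ : ∃ a : Fin n, j = a.succ := Fin.eq_succ_of_ne_zero (by rintro rfl; exact absurd hij (Fin.not_lt.mpr (Fin.zero_le _)))
    obtain ⟨b, rfl⟩ : ∃ b : Fin n, l = b.succ := Fin.eq_succ_of_ne_zero (by rintro rfl; exact absurd (hij.trans hjl) (Fin.not_lt.mpr (Fin.zero_le _)))
    have hab : a < b := Fin.succ_lt_succ_iff.mp hjl
    rcases Fin.eq_zero_or_eq_succ i with rfl | ⟨c, rfl⟩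
    · simp only [ext1_zero, ext1_succ] at h1 h2
      have hba : τ b < τ a := Fin.succAbove_lt_succAbove_iff.mp h2
      have hkb : k ≤ ((τ b : Fin n) : ℕ) := by
        have := Fin.lt_def.mp h1
        rw [succAbove_val] at this
        simp only [hp] at this
        split at this <;> omega
      have ha0 : a ≠ 0 := by
        rintro rfl
        have := Fin.lt_def.mp hba
        omega
      refine hτ 0 a b ((Fin.pos_iff_ne_zero' a).mpr ha0) hab ⟨?_, hba⟩
      · rw [Fin.lt_def]
        have hbne0 : b ≠ 0 := by
          rintro rfl
          have := Fin.lt_def.mp hab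
          simp at this
        have hne : τ 0 ≠ τ b := fun h => hbne0 (τ.injective h).symm
        have : ((τ 0 : Fin n):ℕ) ≠ ((τ b : Fin n):ℕ) := fun h => hne (Fin.ext h)
        omega
    · simp only [ext1_succ] at h1 h2
      exact hτ c a b (Fin.succ_lt_succ_iff.mp hij) hab
        ⟨Fin.succAbove_lt_succAbove_iff.mp h1, Fin.succAbove_lt_succAbove_iff.mp h2⟩

open scoped Classical in
noncomputable def W (n k : ℕ) : ℕ :=
  (Finset.univ.filter (fun σ : Perm (Fin n) =>
    Avoids132 n σ ∧ ∃ h : 0 < n, ((σ ⟨0, h⟩ : Fin n) : ℕ) = k)).card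

open scoped Classical in
lemma W_def (n k : ℕ) [NeZero n] : W n k =
    (Finset.univ.filter (fun σ : Perm (Fin n) =>
      Avoids132 n σ ∧ ((σ 0 : Fin n) : ℕ) = k)).card := by
  classical
  rw [W]
  congr 1
  apply filter_congr
  intro σ _
  have hpos : 0 < n := Nat.pos_of_ne_zero (NeZero.ne n)
  constructor
  · rintro ⟨h1, h2, h3⟩
    exact ⟨h1, by convert h3 using 3; exact Fin.ext (by simp)⟩
  · rintro ⟨h1, h3⟩
    exact ⟨h1, hpos, by convert h3 using 3; exact Fin.ext (by simp)⟩

lemma W_rec {n : ℕ} [NeZero n] (k : ℕ) (hk : k ≤ n) :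
    W (n+1) k = ∑ j ∈ Finset.range (k+1), W n j := by
  classical
  have hk' : k < n + 1 := by omega
  rw [W_def]
  have h1 : (univ.filter (fun σ : Perm (Fin (n+1)) =>
        Avoids132 (n+1) σ ∧ ((σ 0 : Fin (n+1)):ℕ) = k)).card
      = (univ.filter (fun τ : Perm (Fin n) =>
        Avoids132 n τ ∧ ((τ 0 : Fin n):ℕ) ≤ k)).card := by
    rw [eq_comm]
    apply Finset.card_bij (fun τ _ => ext1 ⟨k, hk'⟩ τ)
    · intro τ hτ
      simp only [mem_filter, mem_univ, true_and] at hτ ⊢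
      exact ⟨(avoids_ext1_iff hk' τ).mpr hτ, by rw [ext1_zero]⟩
    · intro τ1 ht1 τ2 ht2 heq
      ext j
      have h := DFunLike.congr_fun heq j.succ
      rw [ext1_succ, ext1_succ] at h
      exact congrArg Fin.val (Fin.succAbove_right_injective h)
    · intro f hf
      simp only [mem_filter, mem_univ, true_and] at hf
      obtain ⟨hfav, hf0⟩ := hf
      have hf0' : f 0 = ⟨k, hk'⟩ := Fin.ext hf0
      have hne : ∀ j : Fin n, f j.succ ≠ (⟨k, hk'⟩ : Fin (n+1)) := by
        intro j h
        exact Fin.succ_ne_zero j (f.injective (h.trans hf0'.symm))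
      have hex : ∀ j : Fin n, ∃ t, (⟨k, hk'⟩ : Fin (n+1)).succAbove t = f j.succ :=
        fun j => Fin.exists_succAbove_eq (hne j)
      set g : Fin n → Fin n := fun j => Classical.choose (hex j) with hg
      have hgs : ∀ j, (⟨k, hk'⟩ : Fin (n+1)).succAbove (g j) = f j.succ :=
        fun j => Classical.choose_spec (hex j)
      have hginj : Function.Injective g := by
        intro j1 j2 h
        have : f j1.succ = f j2.succ := by rw [← hgs j1, ← hgs j2, h]
        exact Fin.succ_injective n (f.injective this)
      set τ : Perm (Fin n) := Equiv.ofBijective g (Finite.injective_iff_bijective.mp hginj)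
        with hτ'
      have hτg : ∀ j, τ j = g j := fun j => rfl
      have hext : ext1 ⟨k, hk'⟩ τ = f := by
        ext i
        induction i using Fin.cases with
        | zero => rw [ext1_zero, hf0']
        | succ j => rw [ext1_succ, hτg, hgs]
      refine ⟨τ, ?_, hext⟩
      simp only [mem_filter, mem_univ, true_and]
      exact (avoids_ext1_iff hk' τ).mp (hext ▸ hfav)
  rw [h1]
  rw [Finset.card_eq_sum_card_fiberwise
    (f := fun τ : Perm (Fin n) => ((τ 0 : Fin n) : ℕ)) (t := Finset.range (k+1))
    (fun τ hτ => by
      simp only [coe_filter, Set.mem_setOf_eq] at hτ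
      exact mem_range.mpr (Nat.lt_succ_of_le hτ.2.2))]
  apply Finset.sum_congr rfl
  intro j hj
  rw [W_def, Finset.filter_filter]
  congr 1
  apply filter_congr
  intro τ _
  simp only [mem_range] at hj
  constructor
  · rintro ⟨⟨h1, _⟩, h3⟩; exact ⟨h1, h3⟩
  · rintro ⟨h1, h3⟩; exact ⟨⟨h1, by omega⟩, h3⟩

lemma W_eq_zero (n k : ℕ) [NeZero n] (h : n ≤ k) : W n k = 0 := by
  classical
  rw [W_def, Finset.card_eq_zero]
  apply Finset.filter_eq_empty_iff.mpr
  intro σ _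
  rintro ⟨-, h0⟩
  exact absurd ((σ 0).isLt) (by omega)

lemma W_one (k : ℕ) : W 1 k = if k = 0 then 1 else 0 := by
  classical
  rw [W_def]
  rcases eq_or_ne k 0 with rfl | hk
  · rw [if_pos rfl, Finset.card_eq_one]
    refine ⟨1, ?_⟩
    apply Finset.eq_singleton_iff_unique_mem.mpr
    constructor
    · simp only [mem_filter, mem_univ, true_and]
      constructor
      · intro i j l hij hjl
        exact absurd (hij.trans hjl) (by omega)
      · rfl
    · intro σ _
      exact Subsingleton.elim σ 1
  · rw [if_neg hk, Finset.card_eq_zero]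
    apply Finset.filter_eq_empty_iff.mpr
    intro σ _
    rintro ⟨-, h0⟩
    exact hk (by omega)

lemma W_eq_c (n : ℕ) (hn : 1 ≤ n) : ∀ k, W n k = CatTri.c n k := by
  induction n with
  | zero => omega
  | succ n ih =>
    intro k
    rcases Nat.lt_or_ge 0 n with h2 | h2
    swap
    · have hn0 : n = 0 := by omega
      subst hn0
      rw [W_one]
      rcases eq_or_ne k 0 with rfl | hk
      · rw [if_pos rfl, CatTri.c_zero]
      · rw [if_neg hk, CatTri.c_eq_zero 1 k (by omega) le_rfl]
    · haveI : NeZero n := ⟨by omega⟩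
      by_cases hkn : k ≤ n
      · rw [W_rec k hkn, CatTri.c_rec n k hkn]
        exact Finset.sum_congr rfl (fun j _ => ih (by omega) j)
      · rw [W_eq_zero (n+1) k (by omega), CatTri.c_eq_zero (n+1) k (by omega) (by omega)]

/-- The number of 132-avoiding permutations of `{1,…,n}` containing exactly `k` values
having at least one greater value on their left (i.e. with `mmp(0,1,0,0)(σ) = k`) equals
the Catalan triangle number `C(n,k) = ((n-k)/n) * choose (n+k-1) k`
(stated multiplied through by `n` to avoid rational arithmetic). -/
theorem card_mmp0100_eq_catalanTriangle (n k : ℕ) (hn : 1 ≤ n) (hk : k ≤ n - 1) :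
    n * Nat.card {σ : Equiv.Perm (Fin n) | Avoids132 n σ ∧ mmp n 0 1 0 0 σ = k} =
    (n - k) * (n + k - 1).choose k := by
  haveI : NeZero n := ⟨by omega⟩
  classical
  have hset : {σ : Equiv.Perm (Fin n) | Avoids132 n σ ∧ mmp n 0 1 0 0 σ = k} =
      {σ : Equiv.Perm (Fin n) | Avoids132 n σ ∧ ((σ 0 : Fin n) : ℕ) = k} := by
    ext σ
    exact and_congr_right fun hσ => by rw [mmp_eq_first n σ hσ]
  rw [hset]
  have hW : Nat.card {σ : Equiv.Perm (Fin n) | Avoids132 n σ ∧ ((σ 0 : Fin n) : ℕ) = k}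
      = W n k := by
    rw [Nat.card_eq_fintype_card, Fintype.card_subtype, W_def]
    congr 1
  rw [hW, W_eq_c n hn k, CatTri.c_closed n hn k]
end

section
/- For all integers 1 ≤ k ≤ n, the number of 132-avoiding permutations σ of {1,…,n} with mmp(0,k,0,0)(σ) = 0 equals the sum of the first k entries of the n-th row of the Catalan triangle, that is, Σ_{j=0}^{k−1} C(n,j) where C(n,j) = ((n−j)/n)·binomial(n+j−1, j). -/
namespace KRaux

/-- Ballot number (Catalan triangle entry), as an integer. -/
def BB (n j : ℕ) : ℤ :=
  if j = 0 then 1 else ((n + j - 1).choose j : ℤ) - (n + j - 1).choose (j - 1)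

def GG (n k : ℕ) : ℤ := ∑ j ∈ Finset.range k, BB n j

def Ct (s : ℕ) : ℤ := if s = 0 then 1 else GG s s

def HH (a b : ℕ) : ℤ := if a = 0 then 1 else GG a (min b a)

@[simp] lemma BB_zero (n : ℕ) : BB n 0 = 1 := by simp [BB]

@[simp] lemma GG_zero (n : ℕ) : GG n 0 = 0 := by simp [GG]

lemma GG_succ (n k : ℕ) : GG n (k + 1) = GG n k + BB n k := Finset.sum_range_succ _ _

@[simp] lemma GG_one (n : ℕ) : GG n 1 = 1 := by simp [GG_succ]

/-- Pascal recurrence for ballot numbers. -/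
lemma BB_pascal (n j : ℕ) (hn : 1 ≤ n) (hj : 1 ≤ j) :
    BB n j = BB (n - 1) j + BB n (j - 1) := by
  obtain ⟨n', rfl⟩ : ∃ n', n = n' + 1 := ⟨n - 1, by omega⟩
  match j, hj with
  | 1, _ =>
    simp [BB, Nat.choose_one_right]
  | (j' + 2), _ =>
    have e1 : n' + 1 + (j' + 2) - 1 = (n' + j' + 1) + 1 := by omega
    have e2 : n' + 1 - 1 + (j' + 2) - 1 = n' + j' + 1 := by omega
    have e3 : n' + 1 + (j' + 2 - 1) - 1 = n' + j' + 1 := by omega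
    simp only [BB, if_neg (by omega : ¬ j' + 2 = 0), if_neg (by omega : ¬ j' + 2 - 1 = 0),
      e1, e2, e3]
    have p1 : (n' + j' + 1 + 1).choose (j' + 2) =
        (n' + j' + 1).choose (j' + 1) + (n' + j' + 1).choose (j' + 2) :=
      Nat.choose_succ_succ _ _
    have p2 : (n' + j' + 1 + 1).choose (j' + 1) =
        (n' + j' + 1).choose j' + (n' + j' + 1).choose (j' + 1) :=
      Nat.choose_succ_succ _ _
    have e4 : j' + 2 - 1 = j' + 1 := rfl
    have e5 : j' + 2 - 1 - 1 = j' := rfl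
    rw [e4, p1, p2, show j' + 1 - 1 = j' from rfl]
    push_cast
    ring

/-- diagonal ballot numbers vanish. -/
lemma BB_diag (s : ℕ) (hs : 1 ≤ s) : BB s s = 0 := by
  have h : s + s - 1 - s = s - 1 := by omega
  have hsymm : (s + s - 1).choose s = (s + s - 1).choose (s - 1) := by
    rw [← Nat.choose_symm (by omega : s ≤ s + s - 1), h]
  simp [BB, if_neg (by omega : ¬ s = 0), hsymm]

lemma GG_ladder (n' k : ℕ) : GG (n' + 1) (k + 1) = GG n' (k + 1) + GG (n' + 1) k := by
  induction k with
  | zero => simp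
  | succ k ih =>
    have hp := BB_pascal (n' + 1) (k + 1) (by omega) (by omega)
    simp only [Nat.add_sub_cancel] at hp
    linarith [GG_succ (n' + 1) (k + 1), GG_succ n' (k + 1), GG_succ (n' + 1) k, ih, hp]

lemma BB_eq_GG (s t : ℕ) : BB (s + 1) t = GG s (t + 1) := by
  induction t with
  | zero => simp
  | succ t ih =>
    have hp := BB_pascal (s + 1) (t + 1) (by omega) (by omega)
    simp only [Nat.add_sub_cancel] at hp
    linarith [GG_succ s (t + 1), ih, hp]

/-- `Ct s = BB (s+1) s`. -/
lemma BB_succ_diag (s : ℕ) : BB (s + 1) s = Ct s := by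
  rcases Nat.eq_zero_or_pos s with rfl | hs
  · simp [Ct]
  · obtain ⟨s', rfl⟩ : ∃ s', s = s' + 1 := ⟨s - 1, by omega⟩
    rw [BB_pascal (s' + 2) (s' + 1) (by omega) (by omega)]
    simp only [Nat.add_sub_cancel]
    rw [show s' + 2 - 1 = s' + 1 from rfl, BB_diag (s' + 1) (by omega), BB_eq_GG]
    simp [Ct]

end KRaux

namespace KRaux2
open KRaux

/-- First-return decomposition of ballot numbers. -/
lemma starstar : ∀ n : ℕ, ∀ K : ℕ, 1 ≤ n → K ≤ n - 1 →
    BB n K = ∑ m ∈ Finset.range (K + 1), Ct m * BB (n - 1 - m) (K - m) := by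
  intro n
  induction n using Nat.strong_induction_on with
  | _ n ihn =>
  intro K
  induction K using Nat.strong_induction_on with
  | _ K ihK =>
  intro hn hK
  rcases Nat.eq_zero_or_pos K with rfl | hKpos
  · simp [Ct]
  · rcases eq_or_lt_of_le hK with hKb | hKlt
    · -- boundary case K = n - 1
      have hKn : n = K + 1 := by omega
      subst hKn
      rw [BB_succ_diag K]
      rw [Finset.sum_range_succ]
      have hz : ∀ m ∈ Finset.range K, Ct m * BB (K + 1 - 1 - m) (K - m) = 0 := by
        intro m hm
        rw [Finset.mem_range] at hm
        have e : K + 1 - 1 - m = K - m := by omega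
        rw [e, BB_diag (K - m) (by omega), mul_zero]
      rw [Finset.sum_congr rfl hz]
      simp
    · -- main case 1 ≤ K ≤ n - 2
      have hn2 : 2 + K ≤ n := by omega
      have hp := BB_pascal n K (by omega) (by omega)
      -- rewrite each term of the sum (except the last) with Pascal
      rw [Finset.sum_range_succ]
      have hterm : ∀ m ∈ Finset.range K, Ct m * BB (n - 1 - m) (K - m) =
          Ct m * BB (n - 1 - 1 - m) (K - m) + Ct m * BB (n - 1 - m) (K - 1 - m) := by
        intro m hm
        rw [Finset.mem_range] at hm
        have := BB_pascal (n - 1 - m) (K - m) (by omega) (by omega)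
        rw [show n - 1 - m - 1 = n - 1 - 1 - m by omega, show K - m - 1 = K - 1 - m by omega]
          at this
        rw [this]
        ring
      rw [Finset.sum_congr rfl hterm, Finset.sum_add_distrib]
      have h1 : ∑ m ∈ Finset.range K, Ct m * BB (n - 1 - 1 - m) (K - m) +
          Ct K * BB (n - 1 - K) 0 =
          ∑ m ∈ Finset.range (K + 1), Ct m * BB (n - 1 - 1 - m) (K - m) := by
        rw [Finset.sum_range_succ]
        simp
      have h2 : ∑ m ∈ Finset.range K, Ct m * BB (n - 1 - m) (K - 1 - m) =
          ∑ m ∈ Finset.range (K - 1 + 1), Ct m * BB (n - 1 - m) (K - 1 - m) := by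
        rw [show K - 1 + 1 = K by omega]
      have e1 := ihn (n - 1) (by omega) K (by omega) (by omega)
      have e2 := ihK (K - 1) (by omega) (by omega) (by omega)
      rw [show n - 1 - 1 = n - 2 by omega] at e1 h1
      simp only [show n - 1 - 1 = n - 2 from by omega, Nat.sub_self]
      linarith [h1, h2, e1, e2, hp]

/-- First-return decomposition at the level of partial sums. -/
lemma star : ∀ K n : ℕ, 1 ≤ n → K ≤ n - 1 →
    GG n K = ∑ m ∈ Finset.range K, Ct m * GG (n - 1 - m) (K - m) := by
  intro K
  induction K with
  | zero => simp
  | succ K ih =>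
    intro n hn hK
    rw [GG_succ, ih n hn (by omega), starstar n K hn (by omega), Finset.sum_range_succ,
      Finset.sum_range_succ]
    have hterm : ∀ m ∈ Finset.range K,
        Ct m * GG (n - 1 - m) (K - m) + Ct m * BB (n - 1 - m) (K - m) =
        Ct m * GG (n - 1 - m) (K + 1 - m) := by
      intro m hm
      rw [Finset.mem_range] at hm
      rw [show K + 1 - m = (K - m) + 1 by omega, GG_succ]
      ring
    have hs : (∑ m ∈ Finset.range K, Ct m * GG (n - 1 - m) (K - m)) +
        ∑ m ∈ Finset.range K, Ct m * BB (n - 1 - m) (K - m) =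
        ∑ m ∈ Finset.range K, Ct m * GG (n - 1 - m) (K + 1 - m) := by
      rw [← Finset.sum_add_distrib]
      exact Finset.sum_congr rfl hterm
    simp only [Nat.sub_self, Nat.add_sub_cancel_left, BB_zero, GG_one, mul_one]
    linarith [hs]

/-- Catalan convolution for `Ct`. -/
lemma cat_conv (n : ℕ) (hn : 1 ≤ n) :
    Ct n = ∑ m ∈ Finset.range n, Ct m * Ct (n - 1 - m) := by
  obtain ⟨n', rfl⟩ : ∃ n', n = n' + 1 := ⟨n - 1, by omega⟩
  have h1 : Ct (n' + 1) = GG (n' + 1) (n' + 1) := by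
    simp [Ct]
  rw [h1, GG_succ, star n' (n' + 1) (by omega) (by omega), Finset.sum_range_succ]
  have hterm : ∀ m ∈ Finset.range n', Ct m * GG (n' + 1 - 1 - m) (n' - m) =
      Ct m * Ct (n' + 1 - 1 - m) := by
    intro m hm
    rw [Finset.mem_range] at hm
    have e : n' + 1 - 1 - m = n' - m := by omega
    rw [e, show Ct (n' - m) = GG (n' - m) (n' - m) from by
      simp [Ct, if_neg (by omega : ¬ n' - m = 0)]]
  rw [Finset.sum_congr rfl hterm]
  have hlast : BB (n' + 1) n' = Ct n' * Ct (n' + 1 - 1 - n') := by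
    rw [BB_succ_diag, show n' + 1 - 1 - n' = 0 from by omega]
    simp [Ct]
  rw [hlast]


@[simp] lemma HH_zero_left (b : ℕ) : HH 0 b = 1 := by simp [HH]

lemma HH_of_lt (m k : ℕ) (h : m < k) : HH m k = Ct m := by
  rcases Nat.eq_zero_or_pos m with rfl | hm
  · simp [Ct]
  · simp [HH, Ct, if_neg (by omega : ¬ m = 0), min_eq_right (by omega : m ≤ k)]

lemma HH_diag (s : ℕ) : HH s s = Ct s := by
  rcases Nat.eq_zero_or_pos s with rfl | hs
  · simp [Ct]
  · simp [HH, Ct, if_neg (by omega : ¬ s = 0)]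

lemma HH_zero_right (s : ℕ) (hs : 1 ≤ s) : HH s 0 = 0 := by
  simp [HH, if_neg (by omega : ¬ s = 0)]

/-- The main numeric recurrence. -/
lemma N1 (n k : ℕ) (hk : 1 ≤ k) (hkn : k ≤ n) :
    GG n k = ∑ m ∈ Finset.range n, HH m k * HH (n - 1 - m) (k - (m + 1)) := by
  rcases eq_or_lt_of_le hkn with rfl | hlt
  · -- k = n
    have hterm : ∀ m ∈ Finset.range k, HH m k * HH (k - 1 - m) (k - (m + 1)) =
        Ct m * Ct (k - 1 - m) := by
      intro m hm
      rw [Finset.mem_range] at hm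
      rw [HH_of_lt m k hm, show k - (m + 1) = k - 1 - m from by omega, HH_diag]
    rw [Finset.sum_congr rfl hterm, ← cat_conv k hk]
    simp [Ct, if_neg (by omega : ¬ k = 0)]
  · -- k < n
    have hn1 : 1 ≤ n - 1 := by omega
    rw [show n = (n - 1) + 1 from by omega, Finset.sum_range_succ]
    have hlast : HH (n - 1) k * HH (n - 1 + 1 - 1 - (n - 1)) (k - (n - 1 + 1)) =
        GG (n - 1) k := by
      rw [show n - 1 + 1 - 1 - (n - 1) = 0 from by omega, HH_zero_left, mul_one,
        HH, if_neg (by omega : ¬ n - 1 = 0), min_eq_left (by omega : k ≤ n - 1)]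
    rw [hlast]
    have hterm : ∀ m ∈ Finset.range (n - 1),
        HH m k * HH (n - 1 + 1 - 1 - m) (k - (m + 1)) =
        Ct m * GG (n - 1 - m) (k - 1 - m) := by
      intro m hm
      rw [Finset.mem_range] at hm
      rw [show n - 1 + 1 - 1 - m = n - 1 - m from by omega]
      rcases Nat.lt_or_ge m k with hmk | hmk
      · rw [HH_of_lt m k hmk, show k - (m + 1) = k - 1 - m from by omega,
          HH, if_neg (by omega : ¬ n - 1 - m = 0),
          min_eq_left (by omega : k - 1 - m ≤ n - 1 - m)]
      · rw [show k - (m + 1) = 0 from by omega, HH_zero_right (n - 1 - m) (by omega),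
          mul_zero, show k - 1 - m = 0 from by omega, GG_zero, mul_zero]
    rw [Finset.sum_congr rfl hterm]
    have hshrink : ∑ m ∈ Finset.range (n - 1), Ct m * GG (n - 1 - m) (k - 1 - m) =
        ∑ m ∈ Finset.range (k - 1), Ct m * GG (n - 1 - m) (k - 1 - m) := by
      refine (Finset.sum_subset (Finset.range_subset_range.2 (by omega)) ?_).symm
      intro x _ hx
      rw [Finset.mem_range, not_lt] at hx
      rw [show k - 1 - x = 0 from by omega, GG_zero, mul_zero]
    rw [hshrink, ← star (k - 1) n (by omega) (by omega)]
    have := GG_ladder (n - 1) (k - 1)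
    rw [show n - 1 + 1 = n from by omega, show k - 1 + 1 = k from by omega] at this
    rw [show n - 1 + 1 = n from by omega]
    linarith [this]

end KRaux2

namespace KRcomb

open Finset

/-- A generic bridge from `Nat.card` of a set in a fintype to a filter cardinality. -/
lemma ncard_setOf {α : Type*} [Fintype α] (p : α → Prop) [DecidablePred p] :
    Nat.card {x | p x} = (Finset.univ.filter p).card := by
  rw [Nat.card_coe_set_eq, Set.ncard_eq_toFinset_card', Set.toFinset_setOf]

/-- number of larger elements to the left of position `i`. -/
noncomputable def tcf {N : ℕ} (σ : Equiv.Perm (Fin N)) (i : Fin N) : ℕ :=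
  Nat.card {j : Fin N | j < i ∧ σ i < σ j}

open scoped Classical in
lemma tcf_eq {N : ℕ} (σ : Equiv.Perm (Fin N)) (i : Fin N) :
    tcf σ i = (Finset.univ.filter (fun j => j < i ∧ σ i < σ j)).card :=
  ncard_setOf _

def Bdd (N k : ℕ) (σ : Equiv.Perm (Fin N)) : Prop := ∀ i, tcf σ i < k

noncomputable def F (N k : ℕ) : ℕ :=
  Nat.card {σ : Equiv.Perm (Fin N) | Avoids132 N σ ∧ Bdd N k σ}

open scoped Classical in
lemma F_eq (N k : ℕ) :
    F N k = (Finset.univ.filter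
      (fun σ : Equiv.Perm (Fin N) => Avoids132 N σ ∧ Bdd N k σ)).card :=
  ncard_setOf _

lemma mmp_eq_zero_iff (n k : ℕ) (σ : Equiv.Perm (Fin n)) :
    mmp n 0 k 0 0 σ = 0 ↔ Bdd n k σ := by
  have hset : {i : Fin n |
      0 ≤ Nat.card {j : Fin n | i < j ∧ σ i < σ j} ∧
      k ≤ Nat.card {j : Fin n | j < i ∧ σ i < σ j} ∧
      0 ≤ Nat.card {j : Fin n | j < i ∧ σ j < σ i} ∧
      0 ≤ Nat.card {j : Fin n | i < j ∧ σ j < σ i}} = {i : Fin n | k ≤ tcf σ i} := by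
    ext i
    simp [tcf]
  rw [mmp, hset, Nat.card_eq_zero]
  constructor
  · rintro (he | hi) i
    · by_contra hc
      exact he.elim' ⟨i, by simpa using not_lt.mp hc⟩
    · exact absurd hi (not_infinite_iff_finite.mpr (Set.toFinite _).to_subtype)
  · intro hb
    left
    constructor
    rintro ⟨i, hi⟩
    exact absurd (hb i) (not_lt.mpr (by simpa using hi))

lemma tcf_le {N : ℕ} (σ : Equiv.Perm (Fin N)) (i : Fin N) : tcf σ i ≤ i.val := by
  classical
  rw [tcf_eq]
  calc (Finset.univ.filter (fun j => j < i ∧ σ i < σ j)).card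
      ≤ (Finset.Iio i).card := by
        apply Finset.card_le_card
        intro j hj
        simp only [Finset.mem_filter] at hj
        exact Finset.mem_Iio.mpr hj.2.1
    _ = i.val := Fin.card_Iio i

lemma F_stab (N k : ℕ) (hk : N ≤ k) : F N k = F N N := by
  have h : ∀ k', N ≤ k' → ∀ σ : Equiv.Perm (Fin N), Bdd N k' σ := by
    intro k' hk' σ i
    exact lt_of_le_of_lt (tcf_le σ i) (lt_of_lt_of_le i.isLt hk')
  have hseteq : {σ : Equiv.Perm (Fin N) | Avoids132 N σ ∧ Bdd N k σ} =
      {σ : Equiv.Perm (Fin N) | Avoids132 N σ ∧ Bdd N N σ} := by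
    ext σ
    simp only [Set.mem_setOf_eq, and_congr_right_iff]
    intro _
    exact ⟨fun _ => h N le_rfl σ, fun _ => h k hk σ⟩
  unfold F
  rw [hseteq]

lemma F_zero_left (k : ℕ) : F 0 k = 1 := by
  classical
  rw [F_eq]
  have : ∀ σ : Equiv.Perm (Fin 0), Avoids132 0 σ ∧ Bdd 0 k σ := by
    intro σ
    exact ⟨fun i => i.elim0, fun i => i.elim0⟩
  rw [Finset.filter_true_of_mem (fun σ _ => this σ)]
  simp [Fintype.card_perm]

lemma F_zero_right (N : ℕ) (hN : 1 ≤ N) : F N 0 = 0 := by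
  classical
  rw [F_eq, Finset.card_eq_zero, Finset.filter_eq_empty_iff]
  intro σ _
  rintro ⟨-, hb⟩
  exact absurd (hb ⟨0, hN⟩) (by omega)


section Decomposition

variable {n m : ℕ}

/-- Insert the maximum: build a permutation of `Fin (n+1)` from a permutation `A` of the
first `m` positions (taking the top remaining values) and a permutation `B` of the last
`n - m` positions (taking the bottom values), with the maximum at position `m`. -/
def phiFun (hm : m ≤ n) (A : Equiv.Perm (Fin m)) (B : Equiv.Perm (Fin (n - m)))
    (i : Fin (n + 1)) : Fin (n + 1) :=
  if h : i.val < m then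
    ⟨n - m + (A ⟨i.val, h⟩).val, by have := (A ⟨i.val, h⟩).isLt; omega⟩
  else if h2 : i.val = m then ⟨n, by omega⟩
  else
    ⟨(B ⟨i.val - m - 1, by have := i.isLt; omega⟩).val, by
      have := (B ⟨i.val - m - 1, by have := i.isLt; omega⟩).isLt; omega⟩

lemma phiFun_injective (hm : m ≤ n) (A : Equiv.Perm (Fin m)) (B : Equiv.Perm (Fin (n - m))) :
    Function.Injective (phiFun hm A B) := by
  intro i j hij
  unfold phiFun at hij
  split_ifs at hij with h1 h2 h3 h4 h5 h6
  all_goals try (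
    exfalso
    have e := congrArg Fin.val hij
    simp only at e
    first
      | (have := (A ⟨i.val, by omega⟩).isLt; have := (B ⟨j.val - m - 1, by omega⟩).isLt; omega)
      | (have := (A ⟨j.val, by omega⟩).isLt; have := (B ⟨i.val - m - 1, by omega⟩).isLt; omega))
  · -- both in block 1
    have e := congrArg Fin.val hij
    simp only at e
    have : A ⟨i.val, h1⟩ = A ⟨j.val, h2⟩ := Fin.ext (by omega)
    have := A.injective this
    exact Fin.ext (by simpa [Fin.ext_iff] using this)
  · -- both equal to m
    exact Fin.ext (by omega)
  · -- both in block 3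
    have e := congrArg Fin.val hij
    simp only at e
    have hb : B ⟨i.val - m - 1, by have := i.isLt; omega⟩ =
        B ⟨j.val - m - 1, by have := j.isLt; omega⟩ := Fin.ext (by omega)
    have := B.injective hb
    simp only [Fin.mk.injEq] at this
    exact Fin.ext (by omega)

noncomputable def phi (hm : m ≤ n) (A : Equiv.Perm (Fin m)) (B : Equiv.Perm (Fin (n - m))) :
    Equiv.Perm (Fin (n + 1)) :=
  Equiv.ofBijective _ (Finite.injective_iff_bijective.mp (phiFun_injective hm A B))

variable (hm : m ≤ n) (A : Equiv.Perm (Fin m)) (B : Equiv.Perm (Fin (n - m)))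

lemma phi_lt {i : ℕ} (h : i < m) (hi : i < n + 1) :
    (phi hm A B ⟨i, hi⟩).val = n - m + (A ⟨i, h⟩).val := by
  simp [phi, Equiv.ofBijective_apply, phiFun, dif_pos h]

lemma phi_mid : (phi hm A B ⟨m, by omega⟩).val = n := by
  simp [phi, Equiv.ofBijective_apply, phiFun]

lemma phi_gt {i : ℕ} (h : m < i) (hi : i < n + 1) :
    (phi hm A B ⟨i, hi⟩).val = (B ⟨i - m - 1, by omega⟩).val := by
  simp only [phi, Equiv.ofBijective_apply, phiFun,
    dif_neg (by omega : ¬ i < m), dif_neg (by omega : ¬ i = m)]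


lemma phi_lt_lb {i : ℕ} (h : i < m) (hi : i < n + 1) :
    n - m ≤ (phi hm A B ⟨i, hi⟩).val := by
  rw [phi_lt hm A B h hi]; omega

lemma phi_lt_ub {i : ℕ} (h : i < m) (hi : i < n + 1) :
    (phi hm A B ⟨i, hi⟩).val < n := by
  rw [phi_lt hm A B h hi]; have := (A ⟨i, h⟩).isLt; omega

lemma phi_gt_ub {i : ℕ} (h : m < i) (hi : i < n + 1) :
    (phi hm A B ⟨i, hi⟩).val < n - m := by
  rw [phi_gt hm A B h hi]; exact (B _).isLt

lemma avoids_phi_iff : Avoids132 (n + 1) (phi hm A B) ↔ Avoids132 m A ∧ Avoids132 (n - m) B := by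
  constructor
  · intro h
    constructor
    · intro i j kk hij hjk ⟨h1, h2⟩
      have hiv := i.isLt
      have hjv := j.isLt
      have hkv := kk.isLt
      refine h ⟨i.val, by omega⟩ ⟨j.val, by omega⟩ ⟨kk.val, by omega⟩
        (Fin.mk_lt_mk.mpr (Fin.lt_def.mp hij)) (Fin.mk_lt_mk.mpr (Fin.lt_def.mp hjk)) ⟨?_, ?_⟩
      · rw [Fin.lt_def, phi_lt hm A B i.isLt, phi_lt hm A B kk.isLt]
        have := Fin.lt_def.mp h1
        simp only [Fin.eta]
        omega
      · rw [Fin.lt_def, phi_lt hm A B kk.isLt, phi_lt hm A B j.isLt]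
        have := Fin.lt_def.mp h2
        simp only [Fin.eta]
        omega
    · intro i j kk hij hjk ⟨h1, h2⟩
      have hiv := i.isLt
      have hjv := j.isLt
      have hkv := kk.isLt
      refine h ⟨m + 1 + i.val, by omega⟩ ⟨m + 1 + j.val, by omega⟩ ⟨m + 1 + kk.val, by omega⟩
        (Fin.mk_lt_mk.mpr (by have := Fin.lt_def.mp hij; omega))
        (Fin.mk_lt_mk.mpr (by have := Fin.lt_def.mp hjk; omega)) ⟨?_, ?_⟩
      · rw [Fin.lt_def, phi_gt hm A B (by omega : m < m + 1 + i.val),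
          phi_gt hm A B (by omega : m < m + 1 + kk.val)]
        have := Fin.lt_def.mp h1
        simp only [show m + 1 + i.val - m - 1 = i.val from by omega,
          show m + 1 + kk.val - m - 1 = kk.val from by omega, Fin.eta]
        omega
      · rw [Fin.lt_def, phi_gt hm A B (by omega : m < m + 1 + kk.val),
          phi_gt hm A B (by omega : m < m + 1 + j.val)]
        have := Fin.lt_def.mp h2
        simp only [show m + 1 + j.val - m - 1 = j.val from by omega,
          show m + 1 + kk.val - m - 1 = kk.val from by omega, Fin.eta]
        omega
  · rintro ⟨hA, hB⟩ i j kk hij hjk ⟨h1, h2⟩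
    have hiv := i.isLt
    have hjv := j.isLt
    have hkv := kk.isLt
    have vij : i.val < j.val := Fin.lt_def.mp hij
    have vjk : j.val < kk.val := Fin.lt_def.mp hjk
    have v1 : (phi hm A B i).val < (phi hm A B kk).val := Fin.lt_def.mp h1
    have v2 : (phi hm A B kk).val < (phi hm A B j).val := Fin.lt_def.mp h2
    rcases Nat.lt_trichotomy kk.val m with hk1 | hk1 | hk1
    · -- all three in block 1 : reduce to A
      have hi1 : i.val < m := by omega
      have hj1 : j.val < m := by omega
      have e1 := phi_lt hm A B hi1 i.isLt
      have e2 := phi_lt hm A B hj1 j.isLt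
      have e3 := phi_lt hm A B hk1 kk.isLt
      simp only [Fin.eta] at e1 e2 e3
      exact hA ⟨i.val, hi1⟩ ⟨j.val, hj1⟩ ⟨kk.val, hk1⟩ (Fin.mk_lt_mk.mpr vij)
        (Fin.mk_lt_mk.mpr vjk) ⟨Fin.lt_def.mpr (by omega), Fin.lt_def.mpr (by omega)⟩
    · -- kk at the maximum : contradiction with h2
      have e3 : (phi hm A B kk).val = n := by
        have hmid := phi_mid hm A B
        have hkk : kk = ⟨m, by omega⟩ := Fin.ext hk1
        rw [hkk]
        exact hmid
      have := (phi hm A B j).isLt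
      omega
    · -- kk in block 3
      have l3 := phi_gt_ub hm A B hk1 kk.isLt
      simp only [Fin.eta] at l3
      rcases Nat.lt_trichotomy j.val m with hj1 | hj1 | hj1
      · have hi1 : i.val < m := by omega
        have l1 := phi_lt_lb hm A B hi1 i.isLt
        simp only [Fin.eta] at l1
        omega
      · have hi1 : i.val < m := by omega
        have l1 := phi_lt_lb hm A B hi1 i.isLt
        simp only [Fin.eta] at l1
        omega
      · rcases Nat.lt_trichotomy i.val m with hi1 | hi1 | hi1
        · have l1 := phi_lt_lb hm A B hi1 i.isLt
          simp only [Fin.eta] at l1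
          omega
        · have e1 : (phi hm A B i).val = n := by
            have hmid := phi_mid hm A B
            have hii : i = ⟨m, by omega⟩ := Fin.ext hi1
            rw [hii]
            exact hmid
          have := (phi hm A B kk).isLt
          omega
        · have e1 := phi_gt hm A B hi1 i.isLt
          have e2 := phi_gt hm A B hj1 j.isLt
          have e3 := phi_gt hm A B hk1 kk.isLt
          simp only [Fin.eta] at e1 e2 e3
          refine hB ⟨i.val - m - 1, by omega⟩ ⟨j.val - m - 1, by omega⟩
            ⟨kk.val - m - 1, by omega⟩ (Fin.mk_lt_mk.mpr (by omega))
            (Fin.mk_lt_mk.mpr (by omega))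
            ⟨Fin.lt_def.mpr (by omega), Fin.lt_def.mpr (by omega)⟩


lemma phi_val_block1 {j : Fin (n + 1)} (hj : j.val < m) :
    (phi hm A B j).val = n - m + (A ⟨j.val, hj⟩).val := by
  have := phi_lt hm A B hj j.isLt
  simpa [Fin.eta] using this

lemma phi_val_mid' {j : Fin (n + 1)} (hj : j.val = m) : (phi hm A B j).val = n := by
  have hjj : j = ⟨m, by omega⟩ := Fin.ext hj
  rw [hjj]
  exact phi_mid hm A B

lemma phi_val_block3 {j : Fin (n + 1)} (hj : m < j.val) :
    (phi hm A B j).val = (B ⟨j.val - m - 1, by have := j.isLt; omega⟩).val := by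
  have := phi_gt hm A B hj j.isLt
  simpa [Fin.eta] using this

lemma phi_val_ge {j : Fin (n + 1)} (hj : j.val ≤ m) : n - m ≤ (phi hm A B j).val := by
  rcases lt_or_eq_of_le hj with h | h
  · rw [phi_val_block1 hm A B h]; omega
  · rw [phi_val_mid' hm A B h]; omega

lemma phi_val_lt_nm {j : Fin (n + 1)} (hj : m < j.val) : (phi hm A B j).val < n - m := by
  rw [phi_val_block3 hm A B hj]
  exact (B _).isLt

open scoped Classical in
lemma filter_val_lt_card (N t : ℕ) (ht : t ≤ N) :
    ((Finset.univ : Finset (Fin N)).filter (fun j => j.val < t)).card = t := by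
  rcases lt_or_eq_of_le ht with h | h
  · have : (Finset.univ : Finset (Fin N)).filter (fun j => j.val < t) =
        Finset.Iio (⟨t, h⟩ : Fin N) := by
      ext j
      simp [Fin.lt_def]
    rw [this, Fin.card_Iio]
  · subst h
    rw [Finset.filter_true_of_mem (fun j _ => j.isLt)]
    simp

open scoped Classical in
lemma tc_phi_block1 {x : Fin (n + 1)} (hx : x.val < m) :
    tcf (phi hm A B) x = tcf A ⟨x.val, hx⟩ := by
  rw [tcf_eq, tcf_eq]
  refine (Finset.card_bij
    (fun (j : Fin m) _ => (⟨j.val, by have := j.isLt; omega⟩ : Fin (n + 1))) ?_ ?_ ?_).symm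
  · intro j hj
    obtain ⟨-, hj1, hj2⟩ := Finset.mem_filter.mp hj
    have hj1v : j.val < x.val := by simpa using Fin.lt_def.mp hj1
    have hj2v : (A ⟨x.val, hx⟩).val < (A j).val := Fin.lt_def.mp hj2
    refine Finset.mem_filter.mpr ⟨Finset.mem_univ _, Fin.lt_def.mpr (by simpa using hj1v),
      Fin.lt_def.mpr ?_⟩
    have e1 := phi_val_block1 hm A B hx
    have e2 := phi_val_block1 hm A B
      (show (⟨j.val, by have := j.isLt; omega⟩ : Fin (n + 1)).val < m by simpa using j.isLt)
    simp only [Fin.eta] at e2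
    rw [e1, e2]
    omega
  · intro a _ b _ hab
    exact Fin.ext (by simpa [Fin.ext_iff] using hab)
  · intro j hj
    obtain ⟨-, hj1, hj2⟩ := Finset.mem_filter.mp hj
    have hj1v : j.val < x.val := Fin.lt_def.mp hj1
    have hjm : j.val < m := lt_trans hj1v hx
    refine ⟨⟨j.val, hjm⟩, Finset.mem_filter.mpr ⟨Finset.mem_univ _,
      Fin.lt_def.mpr (by simpa using hj1v), Fin.lt_def.mpr ?_⟩, Fin.ext (by simp)⟩
    have e1 := phi_val_block1 hm A B hx
    have e2 := phi_val_block1 hm A B hjm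
    have hv := Fin.lt_def.mp hj2
    rw [e1, e2] at hv
    simpa using hv

open scoped Classical in
lemma tc_phi_mid' {x : Fin (n + 1)} (hx : x.val = m) : tcf (phi hm A B) x = 0 := by
  rw [tcf_eq, Finset.card_eq_zero, Finset.filter_eq_empty_iff]
  rintro j - ⟨hj1, hj2⟩
  have h1 := phi_val_mid' hm A B hx
  have h2 := Fin.lt_def.mp hj2
  have := (phi hm A B j).isLt
  omega

open scoped Classical in
lemma tc_phi_block3 {x : Fin (n + 1)} (hx : m < x.val) :
    tcf (phi hm A B) x = (m + 1) + tcf B ⟨x.val - m - 1, by have := x.isLt; omega⟩ := by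
  classical
  rw [tcf_eq, tcf_eq]
  have hvx := x.isLt
  have hsplit : (Finset.univ.filter (fun j : Fin (n + 1) =>
      j < x ∧ phi hm A B x < phi hm A B j)) =
      (Finset.univ.filter (fun j : Fin (n + 1) => j.val < m + 1)) ∪
      (Finset.univ.filter (fun j : Fin (n + 1) =>
        m < j.val ∧ (j < x ∧ phi hm A B x < phi hm A B j))) := by
    ext j
    simp only [Finset.mem_filter, Finset.mem_union, Finset.mem_univ, true_and]
    constructor
    · intro ⟨hj1, hj2⟩
      rcases Nat.lt_or_ge j.val (m + 1) with h | h
      · exact Or.inl h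
      · exact Or.inr ⟨by omega, hj1, hj2⟩
    · rintro (h | ⟨h1, h2⟩)
      · have hlow := phi_val_lt_nm hm A B hx
        have hhigh := phi_val_ge hm A B (show j.val ≤ m by omega)
        exact ⟨Fin.lt_def.mpr (by omega), Fin.lt_def.mpr (by omega)⟩
      · exact h2
  rw [hsplit, Finset.card_union_of_disjoint, filter_val_lt_card (n + 1) (m + 1) (by omega)]
  · congr 1
    refine (Finset.card_bij (fun (j : Fin (n - m)) _ =>
      (⟨m + 1 + j.val, by have := j.isLt; omega⟩ : Fin (n + 1))) ?_ ?_ ?_).symm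
    · intro j hj
      obtain ⟨-, hj1, hj2⟩ := Finset.mem_filter.mp hj
      have hj1v : j.val < x.val - m - 1 := by simpa using Fin.lt_def.mp hj1
      have hj2v : (B ⟨x.val - m - 1, by omega⟩).val < (B j).val := Fin.lt_def.mp hj2
      refine Finset.mem_filter.mpr ⟨Finset.mem_univ _, by show m < m + 1 + j.val; omega,
        Fin.lt_def.mpr (by show m + 1 + j.val < x.val; omega), Fin.lt_def.mpr ?_⟩
      have e1 := phi_val_block3 hm A B hx
      have e2 := phi_val_block3 hm A B
        (show m < (⟨m + 1 + j.val, by have := j.isLt; omega⟩ : Fin (n + 1)).val by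
          show m < m + 1 + j.val; omega)
      simp only [Fin.eta, show m + 1 + j.val - m - 1 = j.val from by omega] at e2
      rw [e1, e2]
      exact hj2v
    · intro a _ b _ hab
      exact Fin.ext (by simpa [Fin.ext_iff] using hab)
    · intro j hj
      obtain ⟨-, hjm, hj1, hj2⟩ := Finset.mem_filter.mp hj
      have hj1v : j.val < x.val := Fin.lt_def.mp hj1
      refine ⟨⟨j.val - m - 1, by have := j.isLt; omega⟩, Finset.mem_filter.mpr
        ⟨Finset.mem_univ _, Fin.lt_def.mpr (by show j.val - m - 1 < x.val - m - 1; omega),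
        Fin.lt_def.mpr ?_⟩, Fin.ext (by show m + 1 + (j.val - m - 1) = j.val; omega)⟩
      have e1 := phi_val_block3 hm A B hx
      have e2 := phi_val_block3 hm A B hjm
      have hv := Fin.lt_def.mp hj2
      rw [e1, e2] at hv
      simpa using hv
  · rw [Finset.disjoint_filter]
    intro j _ hj
    simp only [not_and]
    intro hjm
    omega


lemma bdd_phi_iff (k : ℕ) (hk : 1 ≤ k) :
    Bdd (n + 1) k (phi hm A B) ↔ Bdd m k A ∧ Bdd (n - m) (k - (m + 1)) B := by
  constructor
  · intro h
    constructor
    · intro a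
      have ha := h ⟨a.val, by have := a.isLt; omega⟩
      rw [tc_phi_block1 hm A B (show (⟨a.val, by have := a.isLt; omega⟩ :
        Fin (n + 1)).val < m from a.isLt)] at ha
      simpa [Fin.eta] using ha
    · intro b
      have hb := h ⟨m + 1 + b.val, by have := b.isLt; omega⟩
      rw [tc_phi_block3 hm A B (show m < (⟨m + 1 + b.val, by have := b.isLt; omega⟩ :
        Fin (n + 1)).val from by show m < m + 1 + b.val; omega)] at hb
      simp only [show (⟨m + 1 + b.val, by have := b.isLt; omega⟩ :
        Fin (n + 1)).val = m + 1 + b.val from rfl,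
        show m + 1 + b.val - m - 1 = b.val from by omega, Fin.eta] at hb
      omega
  · rintro ⟨hA, hB⟩ i
    rcases Nat.lt_trichotomy i.val m with h | h | h
    · rw [tc_phi_block1 hm A B h]
      exact hA _
    · rw [tc_phi_mid' hm A B h]
      omega
    · rw [tc_phi_block3 hm A B h]
      have := hB ⟨i.val - m - 1, by have := i.isLt; omega⟩
      omega

lemma phi_symm_top : (phi hm A B)⁻¹ ⟨n, by omega⟩ = ⟨m, by omega⟩ := by
  rw [Equiv.Perm.inv_def, Equiv.symm_apply_eq]
  exact (Fin.ext (phi_mid hm A B)).symm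

lemma phi_pair_inj {A' : Equiv.Perm (Fin m)} {B' : Equiv.Perm (Fin (n - m))}
    (h : phi hm A B = phi hm A' B') : A = A' ∧ B = B' := by
  constructor
  · apply Equiv.ext
    intro a
    apply Fin.ext
    have h1 := congrArg (fun σ : Equiv.Perm (Fin (n + 1)) =>
      (σ ⟨a.val, by have := a.isLt; omega⟩).val) h
    rw [phi_val_block1 hm A B (show (⟨a.val, by have := a.isLt; omega⟩ :
        Fin (n + 1)).val < m from a.isLt),
      phi_val_block1 hm A' B' (show (⟨a.val, by have := a.isLt; omega⟩ :
        Fin (n + 1)).val < m from a.isLt)] at h1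
    simp only [Fin.eta] at h1
    omega
  · apply Equiv.ext
    intro b
    apply Fin.ext
    have pf : m + 1 + b.val < n + 1 := by have := b.isLt; omega
    have h1 := congrArg (fun σ : Equiv.Perm (Fin (n + 1)) => (σ ⟨m + 1 + b.val, pf⟩).val) h
    have e1 := phi_gt hm A B (show m < m + 1 + b.val from by omega) pf
    have e2 := phi_gt hm A' B' (show m < m + 1 + b.val from by omega) pf
    simp only [show m + 1 + b.val - m - 1 = b.val from by omega, Fin.eta] at e1 e2
    omega


open scoped Classical in
lemma phi_surj (σ : Equiv.Perm (Fin (n + 1))) (hav : Avoids132 (n + 1) σ)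
    (hpos : σ ⟨m, by omega⟩ = ⟨n, by omega⟩) :
    ∃ (A : Equiv.Perm (Fin m)) (B : Equiv.Perm (Fin (n - m))), phi hm A B = σ := by
  classical
  have htop : ∀ j : Fin (n + 1), j.val ≠ m → (σ j).val ≠ n := by
    intro j hj hc
    have h1 : σ j = ⟨n, by omega⟩ := Fin.ext hc
    have h2 : σ j = σ ⟨m, by omega⟩ := h1.trans hpos.symm
    have := σ.injective h2
    exact hj (by simpa [Fin.ext_iff] using this)
  have key : ∀ i j : Fin (n + 1), i.val < m → m < j.val → (σ j).val < (σ i).val := by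
    intro i j hi hj
    have hne : (σ i).val ≠ (σ j).val := by
      intro hc
      have := σ.injective (Fin.ext hc)
      have := congrArg Fin.val this
      omega
    by_contra hc
    push_neg at hc
    refine hav i ⟨m, by omega⟩ j (Fin.lt_def.mpr (by simpa using hi))
      (Fin.lt_def.mpr (by simpa using hj)) ⟨Fin.lt_def.mpr (by omega), ?_⟩
    rw [hpos, Fin.lt_def]
    have := htop j (by omega)
    have := (σ j).isLt
    simpa using by omega
  have hlow : ∀ i : Fin (n + 1), i.val < m → n - m ≤ (σ i).val := by
    intro i hi
    have himg : ((Finset.univ.filter (fun j : Fin (n + 1) => m < j.val)).image σ) ⊆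
        Finset.Iio (σ i) := by
      intro y hy
      obtain ⟨j, hj, rfl⟩ := Finset.mem_image.mp hy
      have hjc := (Finset.mem_filter.mp hj).2
      exact Finset.mem_Iio.mpr (Fin.lt_def.mpr (key i j hi hjc))
    have hcard := Finset.card_le_card himg
    rw [Finset.card_image_of_injective _ σ.injective, Fin.card_Iio] at hcard
    have hfc : (Finset.univ.filter (fun j : Fin (n + 1) => m < j.val)).card = n - m := by
      have hsum := Finset.card_filter_add_card_filter_not
        (s := (Finset.univ : Finset (Fin (n + 1)))) (p := fun j => j.val < m + 1)
      rw [filter_val_lt_card (n + 1) (m + 1) (by omega)] at hsum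
      have heq : (Finset.univ.filter (fun j : Fin (n + 1) => ¬ j.val < m + 1)) =
          (Finset.univ.filter (fun j : Fin (n + 1) => m < j.val)) :=
        Finset.filter_congr (fun j _ => by constructor <;> intro <;> omega)
      rw [heq] at hsum
      have : (Finset.univ : Finset (Fin (n + 1))).card = n + 1 := by simp
      omega
    omega
  have hhigh : ∀ j : Fin (n + 1), m < j.val → (σ j).val < n - m := by
    intro j hj
    have himg : ((Finset.univ.filter (fun i : Fin (n + 1) => i.val < m + 1)).image σ) ⊆
        Finset.Ioi (σ j) := by
      intro y hy
      obtain ⟨i, hi, rfl⟩ := Finset.mem_image.mp hy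
      have hic := (Finset.mem_filter.mp hi).2
      rcases Nat.lt_or_ge i.val m with h | h
      · exact Finset.mem_Ioi.mpr (Fin.lt_def.mpr (key i j h hj))
      · have him : i.val = m := by omega
        have : i = ⟨m, by omega⟩ := Fin.ext him
        rw [this, hpos]
        refine Finset.mem_Ioi.mpr (Fin.lt_def.mpr ?_)
        have := htop j (by omega)
        have := (σ j).isLt
        simpa using by omega
    have hcard := Finset.card_le_card himg
    rw [Finset.card_image_of_injective _ σ.injective, Fin.card_Ioi,
      filter_val_lt_card (n + 1) (m + 1) (by omega)] at hcard
    have := (σ j).isLt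
    omega
  -- construct A
  have hAwd : ∀ a : Fin m, (σ ⟨a.val, by have := a.isLt; omega⟩).val - (n - m) < m := by
    intro a
    have h1 := hlow ⟨a.val, by have := a.isLt; omega⟩ a.isLt
    have h2 := htop ⟨a.val, by have := a.isLt; omega⟩ (by show a.val ≠ m; have := a.isLt; omega)
    have h3 := (σ ⟨a.val, by have := a.isLt; omega⟩).isLt
    have := a.isLt
    omega
  set funA : Fin m → Fin m :=
    (fun a => ⟨(σ ⟨a.val, by have := a.isLt; omega⟩).val - (n - m), hAwd a⟩) with hfunA
  have hAinj : Function.Injective funA := by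
    intro a b hab
    have h1 := hlow ⟨a.val, by have := a.isLt; omega⟩ a.isLt
    have h2 := hlow ⟨b.val, by have := b.isLt; omega⟩ b.isLt
    have hv : (σ ⟨a.val, by have := a.isLt; omega⟩).val =
        (σ ⟨b.val, by have := b.isLt; omega⟩).val := by
      have := congrArg Fin.val hab
      simp only [hfunA] at this
      omega
    have := σ.injective (Fin.ext hv)
    exact Fin.ext (by simpa [Fin.ext_iff] using this)
  set A : Equiv.Perm (Fin m) :=
    Equiv.ofBijective funA (Finite.injective_iff_bijective.mp hAinj) with hA
  -- construct B
  set funB : Fin (n - m) → Fin (n - m) :=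
    (fun b => ⟨(σ ⟨m + 1 + b.val, by have := b.isLt; omega⟩).val,
      hhigh _ (by show m < m + 1 + b.val; omega)⟩) with hfunB
  have hBinj : Function.Injective funB := by
    intro a b hab
    have hv : (σ ⟨m + 1 + a.val, by have := a.isLt; omega⟩).val =
        (σ ⟨m + 1 + b.val, by have := b.isLt; omega⟩).val := by
      have := congrArg Fin.val hab
      simpa [hfunB] using this
    have := σ.injective (Fin.ext hv)
    exact Fin.ext (by simpa [Fin.ext_iff] using this)
  set B : Equiv.Perm (Fin (n - m)) :=
    Equiv.ofBijective funB (Finite.injective_iff_bijective.mp hBinj) with hB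
  refine ⟨A, B, ?_⟩
  apply Equiv.ext
  intro x
  apply Fin.ext
  have hxlt := x.isLt
  rcases Nat.lt_trichotomy x.val m with h | h | h
  · have e := phi_val_block1 hm A B h
    have e2 : (A ⟨x.val, h⟩).val = (σ ⟨x.val, by omega⟩).val - (n - m) := rfl
    have e3 : σ (⟨x.val, by omega⟩ : Fin (n + 1)) = σ x := congrArg σ (Fin.ext rfl)
    have e3v := congrArg Fin.val e3
    have hl := hlow x h
    omega
  · have e := phi_val_mid' hm A B h
    have hx : x = ⟨m, by omega⟩ := Fin.ext h
    rw [e, hx, hpos]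
  · have e := phi_val_block3 hm A B h
    have e2 : (B ⟨x.val - m - 1, by omega⟩).val =
        (σ ⟨m + 1 + (x.val - m - 1), by omega⟩).val := rfl
    have e3 : σ (⟨m + 1 + (x.val - m - 1), by omega⟩ : Fin (n + 1)) = σ x :=
      congrArg σ (Fin.ext (by show m + 1 + (x.val - m - 1) = x.val; omega))
    have e3v := congrArg Fin.val e3
    omega


open scoped Classical in
lemma card_fiber (hmn : m ≤ n) (k : ℕ) (hk : 1 ≤ k) :
    (Finset.univ.filter (fun σ : Equiv.Perm (Fin (n + 1)) =>
      (Avoids132 (n + 1) σ ∧ Bdd (n + 1) k σ) ∧ (σ⁻¹ ⟨n, by omega⟩ : Fin (n + 1)).val = m)).card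
    = F m k * F (n - m) (k - (m + 1)) := by
  classical
  rw [F_eq, F_eq, ← Finset.card_product]
  refine (Finset.card_bij (fun p _ => phi hmn p.1 p.2) ?_ ?_ ?_).symm
  · rintro ⟨A, B⟩ hp
    simp only [Finset.mem_product, Finset.mem_filter] at hp
    obtain ⟨⟨-, hA1, hA2⟩, ⟨-, hB1, hB2⟩⟩ := hp
    refine Finset.mem_filter.mpr ⟨Finset.mem_univ _, ⟨?_, ?_⟩, ?_⟩
    · exact (avoids_phi_iff hmn A B).mpr ⟨hA1, hB1⟩
    · exact (bdd_phi_iff hmn A B k hk).mpr ⟨hA2, hB2⟩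
    · exact congrArg Fin.val (phi_symm_top hmn A B)
  · rintro ⟨A, B⟩ h1 ⟨A', B'⟩ h2 hab
    obtain ⟨e1, e2⟩ := phi_pair_inj hmn A B hab
    simp only [Prod.mk.injEq]
    exact ⟨e1, e2⟩
  · intro σ hσ
    obtain ⟨-, ⟨hav, hbdd⟩, hposv⟩ := Finset.mem_filter.mp hσ
    have hpos : σ ⟨m, by omega⟩ = ⟨n, by omega⟩ := by
      have h : σ⁻¹ ⟨n, by omega⟩ = ⟨m, by omega⟩ := Fin.ext hposv
      have h2 := congrArg σ h
      rw [Equiv.Perm.inv_def, Equiv.apply_symm_apply] at h2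
      exact h2.symm
    obtain ⟨A, B, hAB⟩ := phi_surj hmn σ hav hpos
    subst hAB
    refine ⟨(A, B), Finset.mem_product.mpr ⟨?_, ?_⟩, rfl⟩
    · exact Finset.mem_filter.mpr ⟨Finset.mem_univ _, ((avoids_phi_iff hmn A B).mp hav).1,
        ((bdd_phi_iff hmn A B k hk).mp hbdd).1⟩
    · exact Finset.mem_filter.mpr ⟨Finset.mem_univ _, ((avoids_phi_iff hmn A B).mp hav).2,
        ((bdd_phi_iff hmn A B k hk).mp hbdd).2⟩

end Decomposition

open scoped Classical in
lemma F_rec (n k : ℕ) (hk : 1 ≤ k) :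
    F (n + 1) k = ∑ m ∈ Finset.range (n + 1), F m k * F (n - m) (k - (m + 1)) := by
  classical
  rw [F_eq]
  rw [Finset.card_eq_sum_card_fiberwise (f := fun σ : Equiv.Perm (Fin (n + 1)) =>
    ((σ⁻¹ ⟨n, by omega⟩ : Fin (n + 1))).val) (t := Finset.range (n + 1))
    (fun σ _ => Finset.mem_range.mpr (Fin.isLt _))]
  refine Finset.sum_congr rfl fun m hmr => ?_
  have hm : m ≤ n := by have := Finset.mem_range.mp hmr; omega
  rw [Finset.filter_filter]
  exact card_fiber hm k hk

end KRcomb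


namespace KRcomb

lemma F_eq_H : ∀ N k : ℕ, (F N k : ℤ) = KRaux.HH N k := by
  intro N
  induction N using Nat.strong_induction_on with
  | _ N ih =>
  match N with
  | 0 =>
    intro k
    rw [F_zero_left]
    simp [KRaux.HH]
  | (n' + 1) =>
    have hmain : ∀ k, 1 ≤ k → k ≤ n' + 1 → (F (n' + 1) k : ℤ) = KRaux.GG (n' + 1) k := by
      intro k hk hkn
      rw [F_rec n' k hk]
      push_cast
      have hterm : ∀ mm ∈ Finset.range (n' + 1),
          ((F mm k : ℤ)) * ((F (n' - mm) (k - (mm + 1)) : ℕ) : ℤ) =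
          KRaux.HH mm k * KRaux.HH (n' - mm) (k - (mm + 1)) := by
        intro mm hmm
        have h1 : mm < n' + 1 := Finset.mem_range.mp hmm
        rw [ih mm h1, ih (n' - mm) (by omega)]
      rw [Finset.sum_congr rfl hterm]
      have hN1 := KRaux2.N1 (n' + 1) k hk hkn
      simp only [Nat.add_sub_cancel] at hN1
      exact hN1.symm
    intro k
    rcases Nat.eq_zero_or_pos k with rfl | hk
    · rw [F_zero_right (n' + 1) (by omega)]
      simp [KRaux.HH]
    · rcases le_or_gt k (n' + 1) with hle | hgt
      · rw [hmain k hk hle]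
        simp [KRaux.HH, min_eq_left hle]
      · rw [F_stab (n' + 1) k (by omega), hmain (n' + 1) (by omega) le_rfl]
        simp [KRaux.HH, min_eq_right (by omega : n' + 1 ≤ k)]

end KRcomb

/-- For `1 ≤ k ≤ n`, the number of 132-avoiding permutations of `{1,…,n}` with
`mmp(0,k,0,0)(σ) = 0` equals the sum of the first `k` entries of the `n`-th row of the
Catalan triangle, `∑_{j=0}^{k-1} C(n,j)` with `C(n,j) = ((n-j)/n) * choose (n+j-1) j`
(stated multiplied through by `n` to avoid rational arithmetic). -/
theorem card_mmp0k00_zero_eq_sum_catalanTriangle (n k : ℕ) (hk : 1 ≤ k) (hkn : k ≤ n) :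
    n * Nat.card {σ : Equiv.Perm (Fin n) | Avoids132 n σ ∧ mmp n 0 k 0 0 σ = 0} =
    ∑ j ∈ Finset.range k, (n - j) * (n + j - 1).choose j := by
  have hset : {σ : Equiv.Perm (Fin n) | Avoids132 n σ ∧ mmp n 0 k 0 0 σ = 0} =
      {σ : Equiv.Perm (Fin n) | Avoids132 n σ ∧ KRcomb.Bdd n k σ} := by
    ext σ
    simp [KRcomb.mmp_eq_zero_iff]
  have h1 : Nat.card {σ : Equiv.Perm (Fin n) | Avoids132 n σ ∧ mmp n 0 k 0 0 σ = 0} =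
      KRcomb.F n k := by
    rw [hset]
    rfl
  rw [h1]
  have main : (n : ℤ) * KRcomb.F n k =
      ∑ j ∈ Finset.range k, ((n : ℤ) - j) * (n + j - 1).choose j := by
    rw [KRcomb.F_eq_H n k]
    have hH : KRaux.HH n k = KRaux.GG n k := by
      simp [KRaux.HH, (show ¬ n = 0 by omega), min_eq_left hkn]
    rw [hH, KRaux.GG, Finset.mul_sum]
    refine Finset.sum_congr rfl fun j hj => ?_
    have hj' : j < k := Finset.mem_range.mp hj
    rcases Nat.eq_zero_or_pos j with rfl | hjpos
    · simp [KRaux.BB]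
    · rw [KRaux.BB, if_neg (by omega)]
      have hch := Nat.choose_succ_right_eq (n + j - 1) (j - 1)
      rw [show j - 1 + 1 = j from by omega, show n + j - 1 - (j - 1) = n from by omega] at hch
      have hchz := congrArg (Nat.cast : ℕ → ℤ) hch
      push_cast at hchz
      linear_combination hchz
  have hterm : ∀ j ∈ Finset.range k, (((n - j) * (n + j - 1).choose j : ℕ) : ℤ) =
      ((n : ℤ) - j) * (n + j - 1).choose j := by
    intro j hj
    have hjn : j ≤ n := by have := Finset.mem_range.mp hj; omega
    push_cast [hjn]
    ring
  have : ((n * KRcomb.F n k : ℕ) : ℤ) =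
      ((∑ j ∈ Finset.range k, (n - j) * (n + j - 1).choose j : ℕ) : ℤ) := by
    rw [Nat.cast_sum, Finset.sum_congr rfl hterm]
    push_cast
    exact main
  exact Nat.cast_injective this
end
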